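/- arXiv:1907.06459 — 2 statements merged into one kernel-verified Lean document; each statement's English description precedes it below -/
import Mathlib

section
/- For the random-field Ising model on a finite graph G at inverse temperature β ∈ (0,∞) and any field realization η, and for any two vertices u, v ∈ V(G), the truncated correlation admits the disagreement-percolation representation ⟨σ_u; σ_v⟩ = 2 · ⟨⟨ 1[u ↔_D v] ⟩⟩, where ⟨⟨·⟩⟩ is the expectation with respect to the product of two independent identically distributed copies of the extended measure P̄_Ḡ. -/
open MeasureTheory ProbabilityTheory Real BigOperators
open scoped Classical

noncomputable section
namespace RFIM

/-- The two-point spin space `{-1,+1} ⊂ ℤ`. -/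
abbrev Spin : Type := ({-1, 1} : Finset ℤ)
/-- The mid-edge value space `{-1,0,+1} ⊂ ℤ`. -/
abbrev Mid : Type := ({-1, 0, 1} : Finset ℤ)

/-- The real value of a spin. -/
def spinR (s : Spin) : ℝ := ((s : ℤ) : ℝ)

/-- The `+1` spin. -/
def pl : Spin := ⟨1, by decide⟩
/-- The `-1` spin. -/
def mn : Spin := ⟨-1, by decide⟩

section GeneralGraph

variable {V : Type} [Fintype V] [DecidableEq V]

/-- Energy `J σ_u σ_v` carried by an (unordered) edge. -/
def edgeE (J : ℝ) (σ : V → Spin) : Sym2 V → ℝ :=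
  Sym2.lift ⟨fun u v => J * spinR (σ u) * spinR (σ v), fun _ _ => by ring⟩

/-- The RFIM Hamiltonian `H(σ) = -∑_{e} J σ_u σ_v - ∑_v (h + ε η_v) σ_v` on a finite graph. -/
def hamG (G : SimpleGraph V) [DecidableRel G.Adj] (J h ε : ℝ) (η : V → ℝ) (σ : V → Spin) : ℝ :=
  - ∑ e ∈ G.edgeFinset, edgeE J σ e - ∑ v, (h + ε * η v) * spinR (σ v)

/-- Partition function restricted to configurations agreeing with `τ` on `A`. -/
def ZG (G : SimpleGraph V) [DecidableRel G.Adj] (J h ε β : ℝ) (η : V → ℝ)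
    (A : Finset V) (τ : V → Spin) : ℝ :=
  ∑ σ : V → Spin,
    if ∀ v ∈ A, σ v = τ v then Real.exp (-(β * hamG G J h ε η σ)) else 0

/-- Thermal expectation of `f` under the Gibbs measure conditioned on `{σ = τ on A}`. -/
def thermalG (G : SimpleGraph V) [DecidableRel G.Adj] (J h ε β : ℝ) (η : V → ℝ)
    (A : Finset V) (τ : V → Spin) (f : (V → Spin) → ℝ) : ℝ :=
  (∑ σ : V → Spin,
    if ∀ v ∈ A, σ v = τ v then f σ * Real.exp (-(β * hamG G J h ε η σ)) else 0) /
    ZG G J h ε β η A τ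

/-- Partition function with spins constrained to the constant value `s₁` on `A₁`
and `s₂` on `A₂`. -/
def Z2G (G : SimpleGraph V) [DecidableRel G.Adj] (J h ε β : ℝ) (η : V → ℝ)
    (A₁ A₂ : Finset V) (s₁ s₂ : Spin) : ℝ :=
  ∑ σ : V → Spin,
    if (∀ v ∈ A₁, σ v = s₁) ∧ (∀ v ∈ A₂, σ v = s₂) then
      Real.exp (-(β * hamG G J h ε η σ)) else 0

/-- Internal vertex boundary of `Λ` in the graph `G`. -/
def vbdryG (G : SimpleGraph V) [DecidableRel G.Adj] (Λ : Finset V) : Finset V :=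
  Λ.filter fun v => ¬ G.neighborFinset v ⊆ Λ

/-- The surface tension `β⁻¹ log (Z^{++} Z^{--} / (Z^{+-} Z^{-+}))` between the internal
vertex boundaries of `Λ₁` and `Λ₂`. -/
def surfTG (G : SimpleGraph V) [DecidableRel G.Adj] (J h ε β : ℝ) (η : V → ℝ)
    (Λ₁ Λ₂ : Finset V) : ℝ :=
  β⁻¹ * Real.log
    ((Z2G G J h ε β η (vbdryG G Λ₁) (vbdryG G Λ₂) pl pl *
      Z2G G J h ε β η (vbdryG G Λ₁) (vbdryG G Λ₂) mn mn) /
     (Z2G G J h ε β η (vbdryG G Λ₁) (vbdryG G Λ₂) pl mn *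
      Z2G G J h ε β η (vbdryG G Λ₁) (vbdryG G Λ₂) mn pl))

end GeneralGraph
section ExtendedModel

variable {V : Type} [Fintype V] [DecidableEq V]

/-- `t = (e^{2Jβ} - 1)^{-1/2}`. -/
def tpar (J β : ℝ) : ℝ := (Real.sqrt (Real.exp (2 * J * β) - 1))⁻¹
/-- `λ = (2 sinh (Jβ))^{1/2}`. -/
def lampar (J β : ℝ) : ℝ := Real.sqrt (2 * Real.sinh (J * β))

/-- The weight `W(a,b) = λ (δ_{a,b} + t δ_{b,0})`. -/
def Wgt (J β : ℝ) (a b : ℤ) : ℝ :=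
  lampar J β * ((if a = b then 1 else 0) + tpar J β * (if b = 0 then 1 else 0))

/-- The product `W(σ_u, k) W(σ_v, k)` over the two endpoints of an edge. -/
def edgeW (J β : ℝ) (σ : V → Spin) (k : ℤ) : Sym2 V → ℝ :=
  Sym2.lift ⟨fun u v => Wgt J β (σ u : ℤ) k * Wgt J β (σ v : ℤ) k, fun _ _ => mul_comm _ _⟩

/-- The weight of an extended configuration `(σ, κ)`:
`∏_{e ∈ E(G)} ∏_{v ∈ e} W(σ_v, κ_e) · e^{-β ∑_v (h + ε η_v) σ_v}`. -/
def extWeight (G : SimpleGraph V) [DecidableRel G.Adj] (J h ε β : ℝ) (η : V → ℝ)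
    (σ : V → Spin) (κ : G.edgeFinset → Mid) : ℝ :=
  (∏ e : G.edgeFinset, edgeW J β σ (κ e : ℤ) (e : Sym2 V)) *
    Real.exp (-(β * ∑ v, (h + ε * η v) * spinR (σ v)))

/-- Extended partition function restricted to vertex configurations agreeing with `τ` on `A`. -/
def extZ (G : SimpleGraph V) [DecidableRel G.Adj] (J h ε β : ℝ) (η : V → ℝ)
    (A : Finset V) (τ : V → Spin) : ℝ :=
  ∑ σ : V → Spin, ∑ κ : G.edgeFinset → Mid,
    if ∀ v ∈ A, σ v = τ v then extWeight G J h ε β η σ κ else 0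

/-- Extended partition function with vertex spins constrained to the constant `s₁` on `A₁`
and `s₂` on `A₂`. -/
def extZ2 (G : SimpleGraph V) [DecidableRel G.Adj] (J h ε β : ℝ) (η : V → ℝ)
    (A₁ A₂ : Finset V) (s₁ s₂ : Spin) : ℝ :=
  ∑ σ : V → Spin, ∑ κ : G.edgeFinset → Mid,
    if (∀ v ∈ A₁, σ v = s₁) ∧ (∀ v ∈ A₂, σ v = s₂) then extWeight G J h ε β η σ κ else 0

/-- Probability of the extended configuration `(σ,κ)` under the extended measure
conditioned on `{σ = τ on A}`. -/
def extProb (G : SimpleGraph V) [DecidableRel G.Adj] (J h ε β : ℝ) (η : V → ℝ)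
    (A : Finset V) (τ : V → Spin) (σ : V → Spin) (κ : G.edgeFinset → Mid) : ℝ :=
  (if ∀ v ∈ A, σ v = τ v then extWeight G J h ε β η σ κ else 0) / extZ G J h ε β η A τ

/-- Expectation of `F` under the product of the extended measures conditioned on
`{σ = τ on A}` and `{σ' = τ' on A}` respectively. -/
def extExp2 (G : SimpleGraph V) [DecidableRel G.Adj] (J h ε β : ℝ) (η : V → ℝ)
    (A : Finset V) (τ τ' : V → Spin)
    (F : (V → Spin) → (G.edgeFinset → Mid) → (V → Spin) → (G.edgeFinset → Mid) → ℝ) : ℝ :=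
  (∑ σ : V → Spin, ∑ κ : G.edgeFinset → Mid, ∑ σ' : V → Spin, ∑ κ' : G.edgeFinset → Mid,
      if (∀ v ∈ A, σ v = τ v) ∧ (∀ v ∈ A, σ' v = τ' v) then
        F σ κ σ' κ' * extWeight G J h ε β η σ κ * extWeight G J h ε β η σ' κ' else 0) /
    (extZ G J h ε β η A τ * extZ G J h ε β η A τ')

/-- The extended graph: vertices of `G` together with one midpoint per edge, each midpoint
joined to the two endpoints of its edge. -/
def extGraph (G : SimpleGraph V) [DecidableRel G.Adj] :
    SimpleGraph (V ⊕ G.edgeFinset) where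
  Adj x y :=
    match x, y with
    | Sum.inl v, Sum.inr e => v ∈ (e : Sym2 V)
    | Sum.inr e, Sum.inl v => v ∈ (e : Sym2 V)
    | _, _ => False
  symm := ⟨by
    rintro (v | e) (w | f) h
    · exact h.elim
    · exact h
    · exact h
    · exact h.elim⟩
  loopless := ⟨by rintro (v | e) h <;> exact h.elim⟩

/-- The values of an extended configuration on the extended vertex set. -/
def extConf {G : SimpleGraph V} [DecidableRel G.Adj]
    (σ : V → Spin) (κ : G.edgeFinset → Mid) : V ⊕ G.edgeFinset → ℤ :=
  fun z => match z with
  | Sum.inl v => (σ v : ℤ)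
  | Sum.inr e => (κ e : ℤ)

/-- The disagreement set of a pair of extended configurations. -/
def DisSet {G : SimpleGraph V} [DecidableRel G.Adj]
    (σ : V → Spin) (κ : G.edgeFinset → Mid) (σ' : V → Spin) (κ' : G.edgeFinset → Mid) :
    Set (V ⊕ G.edgeFinset) :=
  {z | extConf σ κ z ≠ extConf σ' κ' z}

/-- `x` and `y` are connected by a path of `H` all of whose vertices lie in `D`. -/
def ConnectedIn {α : Type} (H : SimpleGraph α) (D : Set α) (x y : α) : Prop :=
  ∃ p : H.Walk x y, ∀ z ∈ p.support, z ∈ D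

end ExtendedModel
section Lattice

/-- The graph (ℓ¹) distance on `ℤ^d`. -/
def dist1 {d : ℕ} (u v : Fin d → ℤ) : ℤ := ∑ i, |u i - v i|

lemma dist1_comm {d : ℕ} (u v : Fin d → ℤ) : dist1 u v = dist1 v u :=
  Finset.sum_congr rfl fun _ _ => abs_sub_comm _ _

/-- The ball `Λ(L) = {v ∈ ℤ^d : d(0,v) ≤ L}` (for the graph distance) as a finite set. -/
def box (d L : ℕ) : Finset (Fin d → ℤ) :=
  (Finset.Icc (fun _ => -(L : ℤ)) (fun _ => (L : ℤ))).filter fun v => dist1 v 0 ≤ (L : ℤ)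

/-- The nearest-neighbor graph on a finite subset `Λ` of `ℤ^d`. -/
def latG (d : ℕ) (Λ : Finset (Fin d → ℤ)) : SimpleGraph Λ where
  Adj u v := dist1 (u : Fin d → ℤ) (v : Fin d → ℤ) = 1
  symm := ⟨fun u v h => by show dist1 (v : Fin d → ℤ) (u : Fin d → ℤ) = 1; rw [dist1_comm]; exact h⟩
  loopless := ⟨fun u h => by simp [dist1] at h⟩

instance {d : ℕ} {Λ : Finset (Fin d → ℤ)} : DecidableRel (latG d Λ).Adj :=
  fun u v => decidable_of_iff (dist1 (u : Fin d → ℤ) (v : Fin d → ℤ) = 1) Iff.rfl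

/-- The nearest neighbors of a point of `ℤ^d`. -/
def nbrs {d : ℕ} (v : Fin d → ℤ) : Finset (Fin d → ℤ) :=
  (Finset.univ.image fun i : Fin d => Function.update v i (v i + 1)) ∪
    (Finset.univ.image fun i : Fin d => Function.update v i (v i - 1))

/-- The internal vertex boundary `∂_v Λ` of a finite `Λ ⊂ ℤ^d`: points of `Λ` having a
nearest neighbor outside `Λ`. -/
def vbdry {d : ℕ} (Λ : Finset (Fin d → ℤ)) : Finset (Fin d → ℤ) :=
  Λ.filter fun v => ¬ nbrs v ⊆ Λ

/-- Restriction of a field on `ℤ^d` to `Λ`. -/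
def restF {d : ℕ} (Λ : Finset (Fin d → ℤ)) (η : (Fin d → ℤ) → ℝ) : Λ → ℝ := fun v => η ↑v

/-- A subset `A ⊆ ℤ^d` viewed inside `Λ`. -/
def inΛ {d : ℕ} (Λ A : Finset (Fin d → ℤ)) : Finset Λ :=
  Finset.univ.filter fun v => (v : Fin d → ℤ) ∈ A

/-- Thermal expectation of `f` in volume `Λ` with the spins on `A` frozen to the constant
value `τ`, at field realization `η`. -/
def thermalL (d : ℕ) (Λ : Finset (Fin d → ℤ)) (J h ε β : ℝ) (η : (Fin d → ℤ) → ℝ)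
    (A : Finset (Fin d → ℤ)) (τ : Spin) (f : (Λ → Spin) → ℝ) : ℝ :=
  thermalG (latG d Λ) J h ε β (restF Λ η) (inΛ Λ A) (fun _ => τ) f

/-- The i.i.d. standard Gaussian field on `Λ` (extended by `0` off `Λ`),
as a measure on fields on `ℤ^d`. -/
def fieldMeasure (d : ℕ) (Λ : Finset (Fin d → ℤ)) : Measure ((Fin d → ℤ) → ℝ) :=
  (Measure.pi fun _ : Λ => gaussianReal 0 1).map
    fun η v => if hv : v ∈ Λ then η ⟨v, hv⟩ else 0

/-- The spin at the origin, as an observable in volume `Λ`. -/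
def obs0 {d : ℕ} (Λ : Finset (Fin d → ℤ)) : (Λ → Spin) → ℝ :=
  fun σ => ∑ v : Λ, if (v : Fin d → ℤ) = 0 then spinR (σ v) else 0

/-- The order parameter
`m(L) = (1/2) 𝔼[⟨σ_0⟩_{Λ(L)}^+ - ⟨σ_0⟩_{Λ(L)}^-]` of the RFIM on `ℤ^d`. -/
def mOrd (d : ℕ) (J h ε β : ℝ) (L : ℕ) : ℝ :=
  ∫ η, (1/2) *
      (thermalL d (box d L) J h ε β η (vbdry (box d L)) pl (obs0 (box d L)) -
       thermalL d (box d L) J h ε β η (vbdry (box d L)) mn (obs0 (box d L)))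
    ∂ fieldMeasure d (box d L)

/-- The disagreement count
`D_{Λ₁,Λ₂}(η) = (1/2) ∑_{v ∈ Λ₁} [⟨σ_v⟩_{Λ₂}^+ - ⟨σ_v⟩_{Λ₂}^-]`. -/
def DL (d : ℕ) (Λ₁ Λ₂ : Finset (Fin d → ℤ)) (J h ε β : ℝ) (η : (Fin d → ℤ) → ℝ) : ℝ :=
  (1/2) * ∑ v : Λ₂,
    if (v : Fin d → ℤ) ∈ Λ₁ then
      thermalL d Λ₂ J h ε β η (vbdry Λ₂) pl (fun σ => spinR (σ v)) -
      thermalL d Λ₂ J h ε β η (vbdry Λ₂) mn (fun σ => spinR (σ v))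
    else 0

/-- The lattice partition function in volume `Λ` with spins constrained to `s₁` on `A₁`
and `s₂` on `A₂`. -/
def Z2L (d : ℕ) (Λ : Finset (Fin d → ℤ)) (J h ε β : ℝ) (η : (Fin d → ℤ) → ℝ)
    (A₁ A₂ : Finset (Fin d → ℤ)) (s₁ s₂ : Spin) : ℝ :=
  Z2G (latG d Λ) J h ε β (restF Λ η) (inΛ Λ A₁) (inΛ Λ A₂) s₁ s₂

/-- The lattice surface tension `T_{Λ₁,Λ₂}(η)`. -/
def surfT (d : ℕ) (Λ₁ Λ₂ : Finset (Fin d → ℤ)) (J h ε β : ℝ)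
    (η : (Fin d → ℤ) → ℝ) : ℝ :=
  β⁻¹ * Real.log
    ((Z2L d Λ₂ J h ε β η (vbdry Λ₁) (vbdry Λ₂) pl pl *
      Z2L d Λ₂ J h ε β η (vbdry Λ₁) (vbdry Λ₂) mn mn) /
     (Z2L d Λ₂ J h ε β η (vbdry Λ₁) (vbdry Λ₂) pl mn *
      Z2L d Λ₂ J h ε β η (vbdry Λ₁) (vbdry Λ₂) mn pl))

/-- Adding a uniform field of intensity `t` on `Λ`. -/
def shiftF {d : ℕ} (Λ : Finset (Fin d → ℤ)) (t : ℝ) (η : (Fin d → ℤ) → ℝ) :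
    (Fin d → ℤ) → ℝ :=
  fun v => if v ∈ Λ then η v + t else η v

end Lattice
section LatticeExtended

/-- Expectation under the product of the all-`τ` and all-`τ'` conditioned extended measures
in volume `Λ ⊂ ℤ^d`, with conditioning on `A`. -/
def extExp2L (d : ℕ) (Λ : Finset (Fin d → ℤ)) (J h ε β : ℝ) (η : (Fin d → ℤ) → ℝ)
    (A : Finset (Fin d → ℤ)) (τ τ' : Spin)
    (F : (Λ → Spin) → ((latG d Λ).edgeFinset → Mid) →
         (Λ → Spin) → ((latG d Λ).edgeFinset → Mid) → ℝ) : ℝ :=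
  extExp2 (latG d Λ) J h ε β (restF Λ η) (inΛ Λ A) (fun _ => τ) (fun _ => τ') F

/-- The annulus `𝒜_{1,2}(ℓ) = Λ(2ℓ) ∖ Λ(ℓ)` in `ℤ²`. -/
def ann (ℓ : ℕ) : Finset (Fin 2 → ℤ) := box 2 (2 * ℓ) \ box 2 ℓ

/-- The inner boundary of the annulus: its vertices with a neighbor in `Λ(ℓ)`. -/
def innerB (ℓ : ℕ) : Finset (Fin 2 → ℤ) :=
  (ann ℓ).filter fun v => (nbrs v ∩ box 2 ℓ).Nonempty

/-- The outer boundary of the annulus: its vertices with a neighbor outside `Λ(2ℓ)`. -/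
def outerB (ℓ : ℕ) : Finset (Fin 2 → ℤ) :=
  (ann ℓ).filter fun v => ¬ nbrs v ⊆ box 2 (2 * ℓ)

/-- The event that the (extended) annulus `𝒜_{1,2}(ℓ)` is crossed by a path of the
disagreement set of length (number of steps) at most `n`. -/
def crossPred (ℓ : ℕ) (n : ℝ)
    (σ : (ann ℓ) → Spin) (κ : (latG 2 (ann ℓ)).edgeFinset → Mid)
    (σ' : (ann ℓ) → Spin) (κ' : (latG 2 (ann ℓ)).edgeFinset → Mid) : Prop :=
  ∃ (a b : (ann ℓ : Finset (Fin 2 → ℤ))), (a : Fin 2 → ℤ) ∈ innerB ℓ ∧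
    (b : Fin 2 → ℤ) ∈ outerB ℓ ∧
    ∃ w : (extGraph (latG 2 (ann ℓ))).Walk (Sum.inl a) (Sum.inl b),
      (∀ z ∈ w.support, z ∈ DisSet σ κ σ' κ') ∧ (w.length : ℝ) ≤ n

/-- The annealed probability that the annulus `𝒜_{1,2}(ℓ)` is crossed by a disagreement
path of length at most `n`, under `plus/minus` boundary conditions on `∂_v 𝒜_{1,2}(ℓ)`. -/
def crossProb (J h ε β : ℝ) (ℓ : ℕ) (n : ℝ) : ℝ :=
  ∫ η, extExp2L 2 (ann ℓ) J h ε β η (vbdry (ann ℓ)) pl mn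
      (fun σ κ σ' κ' => if crossPred ℓ n σ κ σ' κ' then 1 else 0)
    ∂ fieldMeasure 2 (ann ℓ)

end LatticeExtended
section Lasso

/-- An extended vertex of `Λ̄` lies in the (extended) annulus `Λ(8ℓ) ∖ Λ(ℓ)`. -/
def extInAnn (ℓ : ℕ) (Λ : Finset (Fin 2 → ℤ)) :
    (Λ ⊕ (latG 2 Λ).edgeFinset) → Prop
  | Sum.inl v => (v : Fin 2 → ℤ) ∈ box 2 (8 * ℓ) \ box 2 ℓ
  | Sum.inr e => ∀ u ∈ (e : Sym2 (Λ : Finset (Fin 2 → ℤ))),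
      (u : Fin 2 → ℤ) ∈ box 2 (8 * ℓ) \ box 2 ℓ

/-- The lasso event `𝓛(ℓ)`: the union of connected components of the disagreement set in
`Λ̄(25ℓ)` meeting `∂_v Λ(25ℓ)` contains a circuit lying in the annulus `Λ(8ℓ) ∖ Λ(ℓ)`
which surrounds the inner hole (i.e. meets every extended path from `Λ(ℓ)` to
`∂_v Λ(25ℓ)`). -/
def lassoPred (ℓ : ℕ)
    (σ : (box 2 (25 * ℓ)) → Spin) (κ : (latG 2 (box 2 (25 * ℓ))).edgeFinset → Mid)
    (σ' : (box 2 (25 * ℓ)) → Spin) (κ' : (latG 2 (box 2 (25 * ℓ))).edgeFinset → Mid) :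
    Prop :=
  ∃ (x : (box 2 (25 * ℓ) : Finset (Fin 2 → ℤ)) ⊕ (latG 2 (box 2 (25 * ℓ))).edgeFinset)
    (w : (extGraph (latG 2 (box 2 (25 * ℓ)))).Walk x x),
      0 < w.length ∧
      (∀ z ∈ w.support, z ∈ DisSet σ κ σ' κ' ∧ extInAnn ℓ (box 2 (25 * ℓ)) z) ∧
      (∃ b : (box 2 (25 * ℓ) : Finset (Fin 2 → ℤ)), (b : Fin 2 → ℤ) ∈ vbdry (box 2 (25 * ℓ)) ∧
        ConnectedIn (extGraph (latG 2 (box 2 (25 * ℓ)))) (DisSet σ κ σ' κ') x (Sum.inl b)) ∧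
      (∀ (v b : (box 2 (25 * ℓ) : Finset (Fin 2 → ℤ))),
        (v : Fin 2 → ℤ) ∈ box 2 ℓ → (b : Fin 2 → ℤ) ∈ vbdry (box 2 (25 * ℓ)) →
        ∀ q : (extGraph (latG 2 (box 2 (25 * ℓ)))).Walk (Sum.inl v) (Sum.inl b),
          ∃ z ∈ q.support, z ∈ w.support)

/-- The quenched probability of the lasso event `𝓛(ℓ)` under the plus/minus product of
extended measures in `Λ(25ℓ)` with boundary conditions on `∂_v Λ(25ℓ)`. -/
def lassoExpect (J h ε β : ℝ) (ℓ : ℕ) (η : (Fin 2 → ℤ) → ℝ) : ℝ :=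
  extExp2L 2 (box 2 (25 * ℓ)) J h ε β η (vbdry (box 2 (25 * ℓ))) pl mn
    (fun σ κ σ' κ' => if lassoPred ℓ σ κ σ' κ' then 1 else 0)

/-- The annealed probability of the lasso event `𝓛(ℓ)`. -/
def lassoProb (J h ε β : ℝ) (ℓ : ℕ) : ℝ :=
  ∫ η, lassoExpect J h ε β ℓ η ∂ fieldMeasure 2 (box 2 (25 * ℓ))

end Lasso
section Rectangles

/-- Embedding of `ℤ²` into `ℝ²`. -/
def embL (v : Fin 2 → ℤ) : ℝ × ℝ := ((v 0 : ℝ), (v 1 : ℝ))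

/-- Embedding of the extended lattice into `ℝ²`: vertices to lattice points, midpoints of
edges to the midpoints of the corresponding segments. -/
def embEV {Λ : Finset (Fin 2 → ℤ)} :
    (Λ ⊕ (latG 2 Λ).edgeFinset) → ℝ × ℝ
  | Sum.inl v => embL (v : Fin 2 → ℤ)
  | Sum.inr e =>
      Sym2.lift ⟨fun u w : (Λ : Finset (Fin 2 → ℤ)) =>
          ((1 : ℝ) / 2) • (embL (u : Fin 2 → ℤ) + embL (w : Fin 2 → ℤ)),
        fun a b => by
          show ((1 : ℝ) / 2) • (embL (a : Fin 2 → ℤ) + embL (b : Fin 2 → ℤ)) =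
            ((1 : ℝ) / 2) • (embL (b : Fin 2 → ℤ) + embL (a : Fin 2 → ℤ))
          rw [add_comm]⟩ (e : Sym2 (Λ : Finset (Fin 2 → ℤ)))

/-- The union of the connected components of the disagreement set meeting `∂_v Λ`. -/
def bdryComp (Λ : Finset (Fin 2 → ℤ))
    (σ : Λ → Spin) (κ : (latG 2 Λ).edgeFinset → Mid)
    (σ' : Λ → Spin) (κ' : (latG 2 Λ).edgeFinset → Mid) :
    Set (Λ ⊕ (latG 2 Λ).edgeFinset) :=
  {z | ∃ b : (Λ : Finset (Fin 2 → ℤ)), (b : Fin 2 → ℤ) ∈ vbdry Λ ∧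
    ConnectedIn (extGraph (latG 2 Λ)) (DisSet σ κ σ' κ') z (Sum.inl b)}

/-- The polygonal curve in `ℝ²` associated with `𝒞_{∂_v Λ}`: the union of the straight
segments between embedded adjacent extended vertices of `𝒞_{∂_v Λ}`. -/
def curveSet (Λ : Finset (Fin 2 → ℤ))
    (σ : Λ → Spin) (κ : (latG 2 Λ).edgeFinset → Mid)
    (σ' : Λ → Spin) (κ' : (latG 2 Λ).edgeFinset → Mid) : Set (ℝ × ℝ) :=
  ⋃ (z ∈ bdryComp Λ σ κ σ' κ') (z' ∈ bdryComp Λ σ κ σ' κ')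
      (_ : (extGraph (latG 2 Λ)).Adj z z'),
    segment ℝ (embEV z) (embEV z')

/-- A rectangle in `ℝ²` of arbitrary orientation: a corner, a unit direction of the short
side, and the short side length `w` (the long side has length `5w`). -/
structure Rect where
  corner : ℝ × ℝ
  dir : ℝ × ℝ
  w : ℝ

/-- Rotation of a vector of `ℝ²` by `π/2`. -/
def perp (x : ℝ × ℝ) : ℝ × ℝ := (-x.2, x.1)

/-- The closed rectangle determined by the data of `R`. -/
def Rect.carrier (R : Rect) : Set (ℝ × ℝ) :=
  {x | ∃ s t : ℝ, 0 ≤ s ∧ s ≤ R.w ∧ 0 ≤ t ∧ t ≤ 5 * R.w ∧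
    x = R.corner + s • R.dir + t • perp R.dir}

/-- One of the two short sides of `R`. -/
def Rect.sideA (R : Rect) : Set (ℝ × ℝ) :=
  {x | ∃ s : ℝ, 0 ≤ s ∧ s ≤ R.w ∧ x = R.corner + s • R.dir}

/-- The other short side of `R`. -/
def Rect.sideB (R : Rect) : Set (ℝ × ℝ) :=
  {x | ∃ s : ℝ, 0 ≤ s ∧ s ≤ R.w ∧ x = R.corner + s • R.dir + (5 * R.w) • perp R.dir}

/-- The event `Cross(R)`: the curve associated to `𝒞_{∂_v Λ}` contains a continuous path,
staying in `R`, which connects the two short sides of `R`. -/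
def CrossR (Λ : Finset (Fin 2 → ℤ)) (R : Rect)
    (σ : Λ → Spin) (κ : (latG 2 Λ).edgeFinset → Mid)
    (σ' : Λ → Spin) (κ' : (latG 2 Λ).edgeFinset → Mid) : Prop :=
  ∃ γ : ℝ → ℝ × ℝ, ContinuousOn γ (Set.Icc 0 1) ∧
    (∀ t ∈ Set.Icc (0 : ℝ) 1, γ t ∈ curveSet Λ σ κ σ' κ' ∩ R.carrier) ∧
    γ 0 ∈ R.sideA ∧ γ 1 ∈ R.sideB

/-- A collection of rectangles is well-separated (at scale `ℓ`) if each has unit direction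
vector, aspect ratio `1 × 5` with `10 ≤ ℓ(R) ≤ ℓ/160`, lies in the open `ℓ¹`-annulus of radii
`(5/4)ℓ, (7/4)ℓ`, and distinct rectangles are at mutual `ℓ¹` distance at least
`60·max(ℓ(R₁), ℓ(R₂))`. -/
def WellSeparated (ℓ : ℕ) (ℛ : Finset Rect) : Prop :=
  ∀ R ∈ ℛ, (R.dir.1 ^ 2 + R.dir.2 ^ 2 = 1) ∧
    (10 ≤ R.w ∧ R.w ≤ (ℓ : ℝ) / 160) ∧
    (R.carrier ⊆ {x : ℝ × ℝ | 5 / 4 * (ℓ : ℝ) < |x.1| + |x.2| ∧ |x.1| + |x.2| < 7 / 4 * (ℓ : ℝ)}) ∧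
    ∀ R' ∈ ℛ, R ≠ R' → ∀ p ∈ R.carrier, ∀ q ∈ Rect.carrier R',
      60 * max R.w R'.w ≤ |p.1 - q.1| + |p.2 - q.2|

end Rectangles
section NonAnticipatory

variable {V : Type} [Fintype V] [DecidableEq V]

/-- The extended vertices of `Λ̄`: vertices of `Λ` and midpoints of edges with both
endpoints in `Λ`. -/
def extVerts (G : SimpleGraph V) [DecidableRel G.Adj] (Λ : Finset V) :
    Set (V ⊕ G.edgeFinset) :=
  {z | match z with
    | Sum.inl v => v ∈ Λ
    | Sum.inr e => ∀ u ∈ (e : Sym2 V), u ∈ Λ}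

/-- The forward set `S_F` of `S`: extended vertices outside `S` admitting a path of the
extended graph to `∂_v Λ₁` which is disjoint from `S`. -/
def fwdSet (G : SimpleGraph V) [DecidableRel G.Adj] (Λ₁ : Finset V)
    (S : Set (V ⊕ G.edgeFinset)) : Set (V ⊕ G.edgeFinset) :=
  {u | u ∉ S ∧ ∃ a : V, a ∈ vbdryG G Λ₁ ∧
    ∃ p : (extGraph G).Walk u (Sum.inl a), ∀ z ∈ p.support, z ∉ S}

/-- The backward set `S_B`: the complement of `S_F` in the extended vertex set of `Λ̄₂`. -/
def bwdSet (G : SimpleGraph V) [DecidableRel G.Adj] (Λ₁ Λ₂ : Finset V)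
    (S : Set (V ⊕ G.edgeFinset)) : Set (V ⊕ G.edgeFinset) :=
  extVerts G Λ₂ \ fwdSet G Λ₁ S

/-- `S` is a separating set (between `∂_v Λ₁` and `∂_v Λ₂`). -/
def Separating (G : SimpleGraph V) [DecidableRel G.Adj] (Λ₁ Λ₂ : Finset V)
    (S : Set (V ⊕ G.edgeFinset)) : Prop :=
  (∀ a ∈ vbdryG G Λ₁, Sum.inl a ∈ fwdSet G Λ₁ S) ∧
  (∀ b ∈ vbdryG G Λ₂, Sum.inl b ∈ bwdSet G Λ₁ Λ₂ S)

/-- A random set `𝒮` (a function of the pair of extended configurations) is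
non-anticipatory if, for every deterministic `S`, the event `{𝒮 = S}` is determined by
the restriction of the pair of configurations to `S_B`. -/
def NonAnticipatory (G : SimpleGraph V) [DecidableRel G.Adj] (Λ₁ Λ₂ : Finset V)
    (𝒮 : (V → Spin) → (G.edgeFinset → Mid) → (V → Spin) → (G.edgeFinset → Mid) →
      Set (V ⊕ G.edgeFinset)) : Prop :=
  ∀ (S : Set (V ⊕ G.edgeFinset))
    (σ₁ : V → Spin) (κ₁ : G.edgeFinset → Mid) (σ₁' : V → Spin) (κ₁' : G.edgeFinset → Mid)
    (σ₂ : V → Spin) (κ₂ : G.edgeFinset → Mid) (σ₂' : V → Spin) (κ₂' : G.edgeFinset → Mid),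
    (∀ z ∈ bwdSet G Λ₁ Λ₂ S,
      extConf σ₁ κ₁ z = extConf σ₂ κ₂ z ∧ extConf σ₁' κ₁' z = extConf σ₂' κ₂' z) →
    (𝒮 σ₁ κ₁ σ₁' κ₁' = S ↔ 𝒮 σ₂ κ₂ σ₂' κ₂' = S)

end NonAnticipatory
section Misc

variable {V : Type} [Fintype V] [DecidableEq V]

/-- `𝒞_S`: the union of the connected components of the disagreement set meeting
`{Sum.inl s : s ∈ S}`. -/
def compS (G : SimpleGraph V) [DecidableRel G.Adj] (S : Finset V)
    (σ : V → Spin) (κ : G.edgeFinset → Mid) (σ' : V → Spin) (κ' : G.edgeFinset → Mid) :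
    Set (V ⊕ G.edgeFinset) :=
  {z | ∃ s ∈ S, ConnectedIn (extGraph G) (DisSet σ κ σ' κ') z (Sum.inl s)}

/-- The swap map `R_S^A`: if `𝒞_S` meets `A` it is the identity, and otherwise it
exchanges the two configurations on `𝒞_S`. -/
def Rswap (G : SimpleGraph V) [DecidableRel G.Adj] (A S : Finset V)
    (σ : V → Spin) (κ : G.edgeFinset → Mid) (σ' : V → Spin) (κ' : G.edgeFinset → Mid) :
    ((V → Spin) × (G.edgeFinset → Mid)) × ((V → Spin) × (G.edgeFinset → Mid)) :=
  if ∃ a ∈ A, Sum.inl a ∈ compS G S σ κ σ' κ' then ((σ, κ), (σ', κ'))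
  else
    (((fun v => if Sum.inl v ∈ compS G S σ κ σ' κ' then σ' v else σ v),
      (fun e => if Sum.inr e ∈ compS G S σ κ σ' κ' then κ' e else κ e)),
     ((fun v => if Sum.inl v ∈ compS G S σ κ σ' κ' then σ v else σ' v),
      (fun e => if Sum.inr e ∈ compS G S σ κ σ' κ' then κ e else κ' e)))

/-- The number of vertices of `Λ₁` belonging to `𝒞_{∂_v Λ₂}`, i.e. `|Λ₁ ∩ 𝒞_{∂_v Λ₂}|`. -/
def connCount (Λ₁ Λ₂ : Finset (Fin 2 → ℤ))
    (σ : Λ₂ → Spin) (κ : (latG 2 Λ₂).edgeFinset → Mid)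
    (σ' : Λ₂ → Spin) (κ' : (latG 2 Λ₂).edgeFinset → Mid) : ℝ :=
  ∑ v : (Λ₂ : Finset (Fin 2 → ℤ)),
    if (v : Fin 2 → ℤ) ∈ Λ₁ ∧
        (∃ b : (Λ₂ : Finset (Fin 2 → ℤ)), (b : Fin 2 → ℤ) ∈ vbdry Λ₂ ∧
          ConnectedIn (extGraph (latG 2 Λ₂)) (DisSet σ κ σ' κ') (Sum.inl v) (Sum.inl b))
    then 1 else 0

/-- The standard Gaussian density `φ`. -/
def stdGauss (u : ℝ) : ℝ := (Real.sqrt (2 * Real.pi))⁻¹ * Real.exp (-(u ^ 2 / 2))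

/-- The two-sided standard Gaussian tail `χ(s) = 2 ∫_s^∞ φ(u) du`. -/
def chi (s : ℝ) : ℝ := 2 * ∫ u in Set.Ioi s, stdGauss u

/-- The translate `v + Λ` of a finite subset of `ℤ²`. -/
def trF {d : ℕ} (v : Fin d → ℤ) (Λ : Finset (Fin d → ℤ)) : Finset (Fin d → ℤ) :=
  Λ.image fun x => v + x

end Misc
section Aux1
variable {V : Type} [Fintype V] [DecidableEq V]

lemma spin_cases (s : Spin) : (s : ℤ) = 1 ∨ (s : ℤ) = -1 := by
  have h := s.2
  simp only [Finset.mem_insert, Finset.mem_singleton] at h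
  tauto

/-- Spin negation. -/
def negS (s : Spin) : Spin :=
  ⟨-(s : ℤ), by rcases spin_cases s with h | h <;> simp [h]⟩

lemma coe_negS (s : Spin) : ((negS s : Spin) : ℤ) = -(s : ℤ) := rfl

lemma spinR_negS (s : Spin) : spinR (negS s) = - spinR s := by
  simp [spinR, coe_negS]

lemma negS_negS (s : Spin) : negS (negS s) = s := Subtype.ext (by simp [coe_negS])

lemma lampar_pos {J β : ℝ} (hJ : 0 < J) (hβ : 0 < β) : 0 < lampar J β := by
  have : 0 < Real.sinh (J * β) := Real.sinh_pos_iff.2 (mul_pos hJ hβ)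
  exact Real.sqrt_pos.2 (by linarith)

lemma exp2_gt_one {J β : ℝ} (hJ : 0 < J) (hβ : 0 < β) : 1 < Real.exp (2 * J * β) := by
  rw [← Real.exp_zero]
  exact Real.exp_lt_exp.2 (by positivity)

lemma tpar_pos {J β : ℝ} (hJ : 0 < J) (hβ : 0 < β) : 0 < tpar J β := by
  have := exp2_gt_one hJ hβ
  exact inv_pos.2 (Real.sqrt_pos.2 (by linarith))

lemma lampar_sq {J β : ℝ} (hJ : 0 < J) (hβ : 0 < β) :
    lampar J β ^ 2 = 2 * Real.sinh (J * β) := by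
  have : 0 < Real.sinh (J * β) := Real.sinh_pos_iff.2 (mul_pos hJ hβ)
  exact Real.sq_sqrt (by linarith)

lemma tpar_sq {J β : ℝ} (hJ : 0 < J) (hβ : 0 < β) :
    tpar J β ^ 2 = (Real.exp (2 * J * β) - 1)⁻¹ := by
  have := exp2_gt_one hJ hβ
  rw [tpar, inv_pow, Real.sq_sqrt (by linarith)]

lemma key2 {J β : ℝ} (hJ : 0 < J) (hβ : 0 < β) :
    lampar J β ^ 2 * tpar J β ^ 2 = Real.exp (-(β * J)) := by
  have hE : (0:ℝ) < Real.exp (J * β) := Real.exp_pos _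
  have hE1 : 1 < Real.exp (J * β) := by
    rw [← Real.exp_zero]; exact Real.exp_lt_exp.2 (by positivity)
  have h2 : Real.exp (2 * J * β) = Real.exp (J * β) * Real.exp (J * β) := by
    rw [← Real.exp_add]; ring_nf
  have hneg : Real.exp (-(β * J)) = (Real.exp (J * β))⁻¹ := by
    rw [show -(β * J) = -(J * β) by ring, Real.exp_neg]
  have hneg2 : Real.exp (-(J * β)) = (Real.exp (J * β))⁻¹ := Real.exp_neg _
  rw [lampar_sq hJ hβ, tpar_sq hJ hβ, Real.sinh_eq, h2, hneg, hneg2]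
  have hne : Real.exp (J * β) * Real.exp (J * β) - 1 ≠ 0 := by nlinarith
  have hne' : Real.exp (J * β) ^ 2 - 1 ≠ 0 := by rw [sq]; exact hne
  field_simp

lemma key1 {J β : ℝ} (hJ : 0 < J) (hβ : 0 < β) :
    lampar J β ^ 2 * (1 + tpar J β ^ 2) = Real.exp (β * J) := by
  have h2 := key2 hJ hβ
  have hsplit : lampar J β ^ 2 * (1 + tpar J β ^ 2)
      = lampar J β ^ 2 + lampar J β ^ 2 * tpar J β ^ 2 := by ring
  have hE : (0:ℝ) < Real.exp (J * β) := Real.exp_pos _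
  have hneg : Real.exp (-(β * J)) = (Real.exp (J * β))⁻¹ := by
    rw [show -(β * J) = -(J * β) by ring, Real.exp_neg]
  have hneg2 : Real.exp (-(J * β)) = (Real.exp (J * β))⁻¹ := Real.exp_neg _
  have harg : β * J = J * β := by ring
  rw [hsplit, h2, lampar_sq hJ hβ, Real.sinh_eq, hneg, hneg2, harg]
  field_simp
  ring

end Aux1

section Aux2
variable {V : Type} [Fintype V] [DecidableEq V]

lemma Wgt_nonneg {J β : ℝ} (hJ : 0 < J) (hβ : 0 < β) (a b : ℤ) : 0 ≤ Wgt J β a b := by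
  have h1 := (lampar_pos hJ hβ).le
  have h2 := (tpar_pos hJ hβ).le
  refine mul_nonneg h1 (add_nonneg ?_ (mul_nonneg h2 ?_)) <;> split <;> norm_num

lemma Wgt_sum_int {J β : ℝ} (hJ : 0 < J) (hβ : 0 < β) {a b : ℤ}
    (ha : a = 1 ∨ a = -1) (hb : b = 1 ∨ b = -1) :
    Wgt J β a (-1) * Wgt J β b (-1) + (Wgt J β a 0 * Wgt J β b 0 + Wgt J β a 1 * Wgt J β b 1)
      = Real.exp (β * (J * (a : ℝ) * (b : ℝ))) := by
  have k1 := key1 hJ hβ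
  have k2 := key2 hJ hβ
  rcases ha with rfl | rfl <;> rcases hb with rfl | rfl <;>
    · simp only [Wgt]
      norm_num
      try rw [show β * (J * (1:ℝ) * 1) = β * J by ring]
      try rw [show β * (J * (1:ℝ) * (-1)) = -(β * J) by ring]
      try rw [show β * (J * (-1:ℝ) * 1) = -(β * J) by ring]
      try rw [show β * (J * (-1:ℝ) * (-1)) = β * J by ring]
      first
        | linear_combination k1
        | linear_combination k2

lemma Wgt_sum {J β : ℝ} (hJ : 0 < J) (hβ : 0 < β) (a b : Spin) :
    ∑ k : Mid, Wgt J β (a : ℤ) ((k : ℤ)) * Wgt J β (b : ℤ) ((k : ℤ))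
      = Real.exp (β * (J * spinR a * spinR b)) := by
  rw [Finset.sum_coe_sort (({-1, 0, 1} : Finset ℤ))
    (fun k => Wgt J β (a : ℤ) k * Wgt J β (b : ℤ) k)]
  rw [Finset.sum_insert (by decide), Finset.sum_insert (by decide), Finset.sum_singleton]
  have := Wgt_sum_int hJ hβ (spin_cases a) (spin_cases b)
  simpa [spinR] using this

lemma edgeW_sum {J β : ℝ} (hJ : 0 < J) (hβ : 0 < β) (σ : V → Spin) (e : Sym2 V) :
    ∑ k : Mid, edgeW J β σ ((k : ℤ)) e = Real.exp (β * edgeE J σ e) := by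
  induction e using Sym2.ind with
  | _ a b =>
    simp only [edgeW, edgeE, Sym2.lift_mk]
    exact Wgt_sum hJ hβ (σ a) (σ b)

variable (G : SimpleGraph V) [DecidableRel G.Adj]

lemma extWeight_sum {J β : ℝ} (hJ : 0 < J) (hβ : 0 < β) (h ε : ℝ) (η : V → ℝ) (σ : V → Spin) :
    ∑ κ : G.edgeFinset → Mid, extWeight G J h ε β η σ κ
      = Real.exp (β * ∑ e ∈ G.edgeFinset, edgeE J σ e) *
        Real.exp (-(β * ∑ v, (h + ε * η v) * spinR (σ v))) := by
  simp only [extWeight]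
  rw [← Finset.sum_mul]
  congr 1
  rw [← Fintype.prod_sum (fun (e : G.edgeFinset) (k : Mid) => edgeW J β σ (k : ℤ) (e : Sym2 V))]
  have h1 : ∀ e : G.edgeFinset,
      (∑ k : Mid, edgeW J β σ (k : ℤ) (e : Sym2 V)) = Real.exp (β * edgeE J σ (e : Sym2 V)) :=
    fun e => edgeW_sum hJ hβ σ _
  simp only [h1]
  rw [← Real.exp_sum]
  congr 1
  rw [Finset.mul_sum, ← Finset.sum_coe_sort G.edgeFinset (fun e => β * edgeE J σ e)]

end Aux2

section Aux3
variable {V : Type} [Fintype V] [DecidableEq V]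

lemma edgeE_negS (J : ℝ) (σ : V → Spin) (e : Sym2 V) :
    edgeE J (fun z => negS (σ z)) e = edgeE J σ e := by
  induction e using Sym2.ind with
  | _ a b => simp only [edgeE, Sym2.lift_mk, spinR_negS]; ring

variable (G : SimpleGraph V) [DecidableRel G.Adj]

lemma extWeight_sum_flip {J β : ℝ} (hJ : 0 < J) (hβ : 0 < β) (h ε : ℝ) (η : V → ℝ)
    (σ : V → Spin) :
    ∑ κ : G.edgeFinset → Mid, extWeight G J h ε β η (fun z => negS (σ z)) κ
      = Real.exp (-(β * hamG G J h ε η σ)) := by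
  rw [extWeight_sum G hJ hβ h ε η, ← Real.exp_add]
  congr 1
  have h1 : ∑ e ∈ G.edgeFinset, edgeE J (fun z => negS (σ z)) e
      = ∑ e ∈ G.edgeFinset, edgeE J σ e :=
    Finset.sum_congr rfl fun e _ => edgeE_negS J σ e
  have h2 : ∑ v, (h + ε * η v) * spinR (negS (σ v))
      = - ∑ v, (h + ε * η v) * spinR (σ v) := by
    rw [← Finset.sum_neg_distrib]
    exact Finset.sum_congr rfl fun w _ => by rw [spinR_negS]; ring
  rw [h1, h2, hamG]
  ring

/-- endpoints of a `ConnectedIn` path are in `D`. -/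
lemma ConnectedIn.mem_left {α : Type} {H : SimpleGraph α} {D : Set α} {x y : α}
    (hc : ConnectedIn H D x y) : x ∈ D := by
  obtain ⟨p, hp⟩ := hc
  exact hp x p.start_mem_support

lemma ConnectedIn.mem_right {α : Type} {H : SimpleGraph α} {D : Set α} {x y : α}
    (hc : ConnectedIn H D x y) : y ∈ D := by
  obtain ⟨p, hp⟩ := hc
  exact hp y p.end_mem_support

lemma ConnectedIn.refl {α : Type} {H : SimpleGraph α} {D : Set α} {x : α} (hx : x ∈ D) :
    ConnectedIn H D x x :=
  ⟨SimpleGraph.Walk.nil, by simpa using hx⟩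

lemma ConnectedIn.extend {α : Type} {H : SimpleGraph α} {D : Set α} {x y z : α}
    (hc : ConnectedIn H D x y) (hadj : H.Adj y z) (hz : z ∈ D) : ConnectedIn H D x z := by
  obtain ⟨p, hp⟩ := hc
  refine ⟨p.append (SimpleGraph.Walk.cons hadj SimpleGraph.Walk.nil), ?_⟩
  intro w hw
  rw [SimpleGraph.Walk.mem_support_append_iff] at hw
  rcases hw with hw | hw
  · exact hp w hw
  · simp only [SimpleGraph.Walk.support_cons, SimpleGraph.Walk.support_nil, List.mem_cons,
      List.mem_singleton, List.not_mem_nil, or_false] at hw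
    rcases hw with hw | hw <;> rw [hw]
    · exact hp y p.end_mem_support
    · exact hz

end Aux3

section Aux4
variable {V : Type} [Fintype V] [DecidableEq V]

lemma int_step {A A' K K' : ℤ} (hA : A = 1 ∨ A = -1) (hA' : A' = 1 ∨ A' = -1) (hAA : A ≠ A')
    (hK : K = A ∨ K = 0) (hK' : K' = A' ∨ K' = 0) (hKK : K ≠ K') :
    0 < (A - A') * (K - K') := by
  rcases hA with rfl | rfl <;> rcases hA' with rfl | rfl <;>
    rcases hK with rfl | rfl <;> rcases hK' with rfl | rfl <;> omega

lemma int_four {A A' B B' : ℤ} (hA : A = 1 ∨ A = -1) (hA' : A' = 1 ∨ A' = -1)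
    (hB : B = 1 ∨ B = -1) (hB' : B' = 1 ∨ B' = -1) (hpos : 0 < (A - A') * (B - B')) :
    (A - A') * (B - B') = 4 := by
  rcases hA with rfl | rfl <;> rcases hA' with rfl | rfl <;>
    rcases hB with rfl | rfl <;> rcases hB' with rfl | rfl <;> omega

lemma Wgt_eq_zero {J β : ℝ} {a b : ℤ} (h1 : a ≠ b) (h2 : b ≠ 0) : Wgt J β a b = 0 := by
  simp [Wgt, h1, h2]

variable {G : SimpleGraph V} [DecidableRel G.Adj]

/-- Extended-graph adjacency of a vertex and an incident mid-edge. -/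
lemma extAdj_vm {a : V} {e : G.edgeFinset} (ha : a ∈ (e : Sym2 V)) :
    (extGraph G).Adj (Sum.inl a) (Sum.inr e) := ha

lemma extAdj_mv {a : V} {e : G.edgeFinset} (ha : a ∈ (e : Sym2 V)) :
    (extGraph G).Adj (Sum.inr e) (Sum.inl a) := ha

lemma mem_DisSet_inl {σ σ' : V → Spin} {κ κ' : G.edgeFinset → Mid} {a : V} :
    Sum.inl a ∈ DisSet σ κ σ' κ' ↔ (σ a : ℤ) ≠ (σ' a : ℤ) := Iff.rfl

lemma mem_DisSet_inr {σ σ' : V → Spin} {κ κ' : G.edgeFinset → Mid} {e : G.edgeFinset} :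
    Sum.inr e ∈ DisSet σ κ σ' κ' ↔ ((κ e : Mid) : ℤ) ≠ ((κ' e : Mid) : ℤ) := Iff.rfl

lemma kappa_mem {J h ε β : ℝ} {η : V → ℝ} {σ : V → Spin} {κ : G.edgeFinset → Mid}
    (hw : extWeight G J h ε β η σ κ ≠ 0) (e : G.edgeFinset) (a : V) (ha : a ∈ (e : Sym2 V)) :
    ((κ e : Mid) : ℤ) = (σ a : ℤ) ∨ ((κ e : Mid) : ℤ) = 0 := by
  by_contra hcon
  push_neg at hcon
  apply hw
  unfold extWeight
  apply mul_eq_zero_of_left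
  apply Finset.prod_eq_zero (Finset.mem_univ e)
  obtain ⟨b, hb⟩ := Sym2.mem_iff_exists.1 ha
  rw [hb]
  simp only [edgeW, Sym2.lift_mk]
  rw [Wgt_eq_zero (fun hh => hcon.1 hh.symm) hcon.2, zero_mul]

/-- difference of the two extended configurations. -/
def gfun (σ : V → Spin) (κ : G.edgeFinset → Mid) (σ' : V → Spin) (κ' : G.edgeFinset → Mid)
    (z : V ⊕ G.edgeFinset) : ℤ :=
  extConf σ κ z - extConf σ' κ' z

lemma step_pos {J h ε β : ℝ} {η : V → ℝ} {σ σ' : V → Spin} {κ κ' : G.edgeFinset → Mid}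
    (hw : extWeight G J h ε β η σ κ ≠ 0) (hw' : extWeight G J h ε β η σ' κ' ≠ 0)
    {z z' : V ⊕ G.edgeFinset} (hadj : (extGraph G).Adj z z')
    (hz : z ∈ DisSet σ κ σ' κ') (hz' : z' ∈ DisSet σ κ σ' κ') :
    0 < gfun σ κ σ' κ' z * gfun σ κ σ' κ' z' := by
  have core : ∀ (a : V) (e : G.edgeFinset), a ∈ (e : Sym2 V) →
      Sum.inl a ∈ DisSet σ κ σ' κ' → Sum.inr e ∈ DisSet σ κ σ' κ' →
      0 < gfun σ κ σ' κ' (Sum.inl a) * gfun σ κ σ' κ' (Sum.inr e) := by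
    intro a e hae haD heD
    show 0 < ((σ a : ℤ) - (σ' a : ℤ)) * (((κ e : Mid) : ℤ) - ((κ' e : Mid) : ℤ))
    exact int_step (spin_cases (σ a)) (spin_cases (σ' a)) (mem_DisSet_inl.1 haD)
      (kappa_mem hw e a hae) (kappa_mem hw' e a hae) (mem_DisSet_inr.1 heD)
  cases z with
  | inl a =>
    cases z' with
    | inl b => exact (hadj : False).elim
    | inr e => exact core a e hadj hz hz'
  | inr e =>
    cases z' with
    | inl a => rw [mul_comm]; exact core a e hadj hz' hz
    | inr f => exact (hadj : False).elim

lemma walk_pos {J h ε β : ℝ} {η : V → ℝ} {σ σ' : V → Spin} {κ κ' : G.edgeFinset → Mid}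
    (hw : extWeight G J h ε β η σ κ ≠ 0) (hw' : extWeight G J h ε β η σ' κ' ≠ 0)
    {x y : V ⊕ G.edgeFinset} (p : (extGraph G).Walk x y)
    (hp : ∀ z ∈ p.support, z ∈ DisSet σ κ σ' κ') :
    0 < gfun σ κ σ' κ' x * gfun σ κ σ' κ' y := by
  induction p with
  | nil =>
    rename_i x
    have hx : x ∈ DisSet σ κ σ' κ' := hp x (SimpleGraph.Walk.start_mem_support _)
    have : gfun σ κ σ' κ' x ≠ 0 := sub_ne_zero_of_ne hx
    exact mul_self_pos.2 this
  | @cons a b c hadj q ih =>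
    have hq : ∀ z ∈ q.support, z ∈ DisSet σ κ σ' κ' := fun z hz =>
      hp z (by simp [SimpleGraph.Walk.support_cons, hz])
    have h1 : 0 < gfun σ κ σ' κ' a * gfun σ κ σ' κ' b :=
      step_pos hw hw' hadj (hp a (SimpleGraph.Walk.start_mem_support _))
        (hq b (SimpleGraph.Walk.start_mem_support _))
    have h2 := ih hq
    nlinarith [mul_pos h1 h2, sq_nonneg (gfun σ κ σ' κ' b), h1, h2]

lemma conn_four {J h ε β : ℝ} {η : V → ℝ} {σ σ' : V → Spin} {κ κ' : G.edgeFinset → Mid}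
    (hw : extWeight G J h ε β η σ κ ≠ 0) (hw' : extWeight G J h ε β η σ' κ' ≠ 0) {u v : V}
    (hconn : ConnectedIn (extGraph G) (DisSet σ κ σ' κ') (Sum.inl u) (Sum.inl v)) :
    (spinR (σ u) - spinR (σ' u)) * (spinR (σ v) - spinR (σ' v)) = 4 := by
  obtain ⟨p, hp⟩ := hconn
  have hpos : 0 < ((σ u : ℤ) - (σ' u : ℤ)) * ((σ v : ℤ) - (σ' v : ℤ)) :=
    walk_pos hw hw' p hp
  have h4 : ((σ u : ℤ) - (σ' u : ℤ)) * ((σ v : ℤ) - (σ' v : ℤ)) = 4 :=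
    int_four (spin_cases _) (spin_cases _) (spin_cases _) (spin_cases _) hpos
  unfold spinR
  exact_mod_cast h4

end Aux4

section Aux5
variable {V : Type} [Fintype V] [DecidableEq V] {G : SimpleGraph V} [DecidableRel G.Adj]

/-- Extended vertices connected within `D` to `Sum.inl u`. -/
def Cset (D : Set (V ⊕ G.edgeFinset)) (u : V) : Set (V ⊕ G.edgeFinset) :=
  {z | ConnectedIn (extGraph G) D (Sum.inl u) z}

/-- Swap of the vertex spins on the cluster of `u`. -/
noncomputable def swσ (D : Set (V ⊕ G.edgeFinset)) (u : V) (σ σ' : V → Spin) : V → Spin :=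
  fun z => if Sum.inl z ∈ Cset D u then σ' z else σ z

/-- Swap of the mid-edge values on the cluster of `u`. -/
noncomputable def swκ (D : Set (V ⊕ G.edgeFinset)) (u : V) (κ κ' : G.edgeFinset → Mid) :
    G.edgeFinset → Mid :=
  fun e => if Sum.inr e ∈ Cset D u then κ' e else κ e

lemma extConf_sw (D : Set (V ⊕ G.edgeFinset)) (u : V) (σ σ' : V → Spin)
    (κ κ' : G.edgeFinset → Mid) (z : V ⊕ G.edgeFinset) :
    extConf (swσ D u σ σ') (swκ D u κ κ') z
      = if z ∈ Cset D u then extConf σ' κ' z else extConf σ κ z := by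
  cases z with
  | inl w =>
    show ((if Sum.inl w ∈ Cset D u then σ' w else σ w : Spin) : ℤ) = _
    split_ifs <;> rfl
  | inr e =>
    show ((if Sum.inr e ∈ Cset D u then κ' e else κ e : Mid) : ℤ) = _
    split_ifs <;> rfl

lemma DisSet_sw (D : Set (V ⊕ G.edgeFinset)) (u : V) (σ σ' : V → Spin)
    (κ κ' : G.edgeFinset → Mid) :
    DisSet (swσ D u σ σ') (swκ D u κ κ') (swσ D u σ' σ) (swκ D u κ' κ)
      = DisSet σ κ σ' κ' := by
  ext z
  simp only [DisSet, Set.mem_setOf_eq, extConf_sw]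
  split_ifs with hc
  · exact ne_comm
  · exact Iff.rfl

lemma swσ_invol (D : Set (V ⊕ G.edgeFinset)) (u : V) (σ σ' : V → Spin) :
    swσ D u (swσ D u σ σ') (swσ D u σ' σ) = σ := by
  funext z
  by_cases hc : Sum.inl z ∈ Cset D u <;> simp [swσ, hc]

lemma swκ_invol (D : Set (V ⊕ G.edgeFinset)) (u : V) (κ κ' : G.edgeFinset → Mid) :
    swκ D u (swκ D u κ κ') (swκ D u κ' κ) = κ := by
  funext e
  by_cases hc : Sum.inr e ∈ Cset D u <;> simp [swκ, hc]

lemma endpoint_sw {J β : ℝ} (σ σ' : V → Spin) (κ κ' : G.edgeFinset → Mid) (u : V)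
    (e : G.edgeFinset) (a : V) (ha : a ∈ (e : Sym2 V)) :
    Wgt J β ((swσ (DisSet σ κ σ' κ') u σ σ') a : ℤ) (((swκ (DisSet σ κ σ' κ') u κ κ') e : Mid) : ℤ)
      * Wgt J β ((swσ (DisSet σ κ σ' κ') u σ' σ) a : ℤ)
          (((swκ (DisSet σ κ σ' κ') u κ' κ) e : Mid) : ℤ)
    = Wgt J β ((σ a : Spin) : ℤ) (((κ e : Mid)) : ℤ)
      * Wgt J β ((σ' a : Spin) : ℤ) (((κ' e : Mid)) : ℤ) := by
  set D := DisSet σ κ σ' κ' with hD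
  by_cases hm : Sum.inr e ∈ Cset D u <;> by_cases hv : Sum.inl a ∈ Cset D u <;>
    simp only [swσ, swκ, hm, hv, if_true, if_false, ite_true, ite_false]
  · exact mul_comm _ _
  · -- midpoint in cluster, vertex not: vertex not in disagreement
    have haD : Sum.inl a ∉ D := fun hDa => hv (hm.extend (extAdj_mv ha) hDa)
    have heq : (σ a : ℤ) = (σ' a : ℤ) := not_not.1 (fun hne => haD hne)
    rw [show (σ' a : ℤ) = (σ a : ℤ) from heq.symm]
    exact mul_comm _ _
  · -- vertex in cluster, midpoint not: midpoint not in disagreement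
    have heD : Sum.inr e ∉ D := fun hDe => hm (hv.extend (extAdj_vm ha) hDe)
    have heq : ((κ e : Mid) : ℤ) = ((κ' e : Mid) : ℤ) := not_not.1 (fun hne => heD hne)
    rw [heq]
    exact mul_comm _ _

lemma edgeW_mul_edgeW {J β : ℝ} (σ1 σ2 τ1 τ2 : V → Spin) (k1 k2 l1 l2 : ℤ) (s : Sym2 V)
    (hpt : ∀ a ∈ s, Wgt J β (σ1 a : ℤ) k1 * Wgt J β (σ2 a : ℤ) k2
      = Wgt J β (τ1 a : ℤ) l1 * Wgt J β (τ2 a : ℤ) l2) :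
    edgeW J β σ1 k1 s * edgeW J β σ2 k2 s = edgeW J β τ1 l1 s * edgeW J β τ2 l2 s := by
  induction s using Sym2.ind with
  | _ a b =>
    simp only [edgeW, Sym2.lift_mk]
    have ha := hpt a (Sym2.mem_mk_left a b)
    have hb := hpt b (Sym2.mem_mk_right a b)
    rw [mul_mul_mul_comm, ha, hb, mul_mul_mul_comm]

lemma extWeight_sw (J h ε β : ℝ) (η : V → ℝ) (σ σ' : V → Spin) (κ κ' : G.edgeFinset → Mid)
    (u : V) :
    extWeight G J h ε β η (swσ (DisSet σ κ σ' κ') u σ σ') (swκ (DisSet σ κ σ' κ') u κ κ') *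
      extWeight G J h ε β η (swσ (DisSet σ κ σ' κ') u σ' σ) (swκ (DisSet σ κ σ' κ') u κ' κ)
    = extWeight G J h ε β η σ κ * extWeight G J h ε β η σ' κ' := by
  set D := DisSet σ κ σ' κ' with hD
  unfold extWeight
  rw [mul_mul_mul_comm, mul_mul_mul_comm (∏ e : G.edgeFinset, edgeW J β σ ((κ e : Mid) : ℤ) (e : Sym2 V))]
  congr 1
  · rw [← Finset.prod_mul_distrib, ← Finset.prod_mul_distrib]
    refine Finset.prod_congr rfl fun e _ => ?_
    exact edgeW_mul_edgeW _ _ _ _ _ _ _ _ _ (fun a ha => endpoint_sw σ σ' κ κ' u e a ha)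
  · rw [← Real.exp_add, ← Real.exp_add]
    congr 1
    have hsum : (∑ w, (h + ε * η w) * spinR ((swσ D u σ σ') w))
        + (∑ w, (h + ε * η w) * spinR ((swσ D u σ' σ) w))
        = (∑ w, (h + ε * η w) * spinR (σ w)) + (∑ w, (h + ε * η w) * spinR (σ' w)) := by
      rw [← Finset.sum_add_distrib, ← Finset.sum_add_distrib]
      refine Finset.sum_congr rfl fun w _ => ?_
      simp only [swσ]
      split_ifs with hc <;> ring
    linear_combination (-β) * hsum

end Aux5

section Aux6
variable {V : Type} [Fintype V] [DecidableEq V] {G : SimpleGraph V} [DecidableRel G.Adj]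

lemma spinR_inj {s t : Spin} (hst : spinR s = spinR t) : s = t := by
  apply Subtype.ext
  have : ((s : ℤ) : ℝ) = ((t : ℤ) : ℝ) := hst
  exact_mod_cast this

lemma spin_diff_u (σ σ' : V → Spin) (κ κ' : G.edgeFinset → Mid) (u : V) :
    spinR ((swσ (DisSet σ κ σ' κ') u σ σ') u) - spinR ((swσ (DisSet σ κ σ' κ') u σ' σ) u)
      = -(spinR (σ u) - spinR (σ' u)) := by
  by_cases hc : Sum.inl u ∈ Cset (DisSet σ κ σ' κ') u
  · simp only [swσ, hc, if_true, ite_true]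
    ring
  · have hu : Sum.inl u ∉ DisSet σ κ σ' κ' := fun hD => hc (ConnectedIn.refl hD)
    have h1 : (σ u : ℤ) = (σ' u : ℤ) := not_not.1 hu
    have h2 : spinR (σ u) = spinR (σ' u) := by unfold spinR; exact_mod_cast h1
    simp only [swσ, hc, if_false, ite_false]
    rw [h2]; ring

lemma spin_diff_v {σ σ' : V → Spin} {κ κ' : G.edgeFinset → Mid} {u v : V}
    (hnc : ¬ ConnectedIn (extGraph G) (DisSet σ κ σ' κ') (Sum.inl u) (Sum.inl v)) :
    spinR ((swσ (DisSet σ κ σ' κ') u σ σ') v) - spinR ((swσ (DisSet σ κ σ' κ') u σ' σ) v)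
      = spinR (σ v) - spinR (σ' v) := by
  have hc : Sum.inl v ∉ Cset (DisSet σ κ σ' κ') u := hnc
  simp only [swσ, hc, if_false, ite_false]

/-- the swap of the two copies on the disagreement cluster of `u`, active only when `u` is
not connected to `v` in the disagreement set. -/
noncomputable def swapP (G : SimpleGraph V) [DecidableRel G.Adj] (u v : V)
    (x : ((V → Spin) × (G.edgeFinset → Mid)) × ((V → Spin) × (G.edgeFinset → Mid))) :
    ((V → Spin) × (G.edgeFinset → Mid)) × ((V → Spin) × (G.edgeFinset → Mid)) :=
  if ConnectedIn (extGraph G) (DisSet x.1.1 x.1.2 x.2.1 x.2.2) (Sum.inl u) (Sum.inl v) then x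
  else ((swσ (DisSet x.1.1 x.1.2 x.2.1 x.2.2) u x.1.1 x.2.1,
         swκ (DisSet x.1.1 x.1.2 x.2.1 x.2.2) u x.1.2 x.2.2),
        (swσ (DisSet x.1.1 x.1.2 x.2.1 x.2.2) u x.2.1 x.1.1,
         swκ (DisSet x.1.1 x.1.2 x.2.1 x.2.2) u x.2.2 x.1.2))

lemma swapP_pos {u v : V} {σ σ' : V → Spin} {κ κ' : G.edgeFinset → Mid}
    (hc : ConnectedIn (extGraph G) (DisSet σ κ σ' κ') (Sum.inl u) (Sum.inl v)) :
    swapP G u v ((σ, κ), (σ', κ')) = ((σ, κ), (σ', κ')) := by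
  unfold swapP
  exact if_pos hc

lemma swapP_neg {u v : V} {σ σ' : V → Spin} {κ κ' : G.edgeFinset → Mid}
    (hc : ¬ ConnectedIn (extGraph G) (DisSet σ κ σ' κ') (Sum.inl u) (Sum.inl v)) :
    swapP G u v ((σ, κ), (σ', κ'))
      = ((swσ (DisSet σ κ σ' κ') u σ σ', swκ (DisSet σ κ σ' κ') u κ κ'),
         (swσ (DisSet σ κ σ' κ') u σ' σ, swκ (DisSet σ κ σ' κ') u κ' κ)) := by
  unfold swapP
  exact if_neg hc

lemma cancel (G : SimpleGraph V) [DecidableRel G.Adj] (J h ε β : ℝ) (η : V → ℝ) (u v : V) :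
    ∑ x : ((V → Spin) × (G.edgeFinset → Mid)) × ((V → Spin) × (G.edgeFinset → Mid)),
      ((spinR (x.1.1 u) - spinR (x.2.1 u)) * (spinR (x.1.1 v) - spinR (x.2.1 v))
          - (if ConnectedIn (extGraph G) (DisSet x.1.1 x.1.2 x.2.1 x.2.2)
              (Sum.inl u) (Sum.inl v) then (4 : ℝ) else 0))
        * (extWeight G J h ε β η x.1.1 x.1.2 * extWeight G J h ε β η x.2.1 x.2.2) = 0 := by
  have hfzero : ∀ (σ σ' : V → Spin) (κ κ' : G.edgeFinset → Mid),
      ConnectedIn (extGraph G) (DisSet σ κ σ' κ') (Sum.inl u) (Sum.inl v) →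
      ((spinR (σ u) - spinR (σ' u)) * (spinR (σ v) - spinR (σ' v))
          - (if ConnectedIn (extGraph G) (DisSet σ κ σ' κ') (Sum.inl u) (Sum.inl v)
              then (4 : ℝ) else 0))
        * (extWeight G J h ε β η σ κ * extWeight G J h ε β η σ' κ') = 0 := by
    intro σ σ' κ κ' hc
    rw [if_pos hc]
    by_cases hww : extWeight G J h ε β η σ κ * extWeight G J h ε β η σ' κ' = 0
    · rw [hww, mul_zero]
    · obtain ⟨hw, hw'⟩ := mul_ne_zero_iff.1 hww
      rw [conn_four hw hw' hc, sub_self, zero_mul]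
  apply Finset.sum_ninvolution (swapP G u v)
  · rintro ⟨⟨σ, κ⟩, σ', κ'⟩
    by_cases hc : ConnectedIn (extGraph G) (DisSet σ κ σ' κ') (Sum.inl u) (Sum.inl v)
    · rw [swapP_pos hc]
      have h0 := hfzero σ σ' κ κ' hc
      simp only at h0 ⊢
      rw [h0]; norm_num
    · rw [swapP_neg hc]
      simp only
      have hDy := DisSet_sw (DisSet σ κ σ' κ') u σ σ' κ κ'
      have hcy : ¬ ConnectedIn (extGraph G)
          (DisSet (swσ (DisSet σ κ σ' κ') u σ σ') (swκ (DisSet σ κ σ' κ') u κ κ')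
            (swσ (DisSet σ κ σ' κ') u σ' σ) (swκ (DisSet σ κ σ' κ') u κ' κ))
          (Sum.inl u) (Sum.inl v) := by rw [hDy]; exact hc
      rw [if_neg hc, if_neg hcy, extWeight_sw, spin_diff_u, spin_diff_v hc]
      ring
  · rintro ⟨⟨σ, κ⟩, σ', κ'⟩ hfx
    by_cases hc : ConnectedIn (extGraph G) (DisSet σ κ σ' κ') (Sum.inl u) (Sum.inl v)
    · exact absurd (hfzero σ σ' κ κ' hc) hfx
    · intro heq
      rw [swapP_neg hc] at heq
      have h1 : swσ (DisSet σ κ σ' κ') u σ σ' = σ := congrArg (fun t => t.1.1) heq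
      simp only [if_neg hc] at hfx
      have hT : (spinR (σ u) - spinR (σ' u)) * (spinR (σ v) - spinR (σ' v)) - 0 ≠ 0 := by
        intro h0
        exact hfx (by rw [h0, zero_mul])
      have hTu : spinR (σ u) ≠ spinR (σ' u) := by
        intro h0
        apply hT
        rw [h0]; ring
      have huD : Sum.inl u ∈ DisSet σ κ σ' κ' := by
        rw [mem_DisSet_inl]
        intro h0
        exact hTu (by unfold spinR; exact_mod_cast h0)
      have hcu : Sum.inl u ∈ Cset (DisSet σ κ σ' κ') u := ConnectedIn.refl huD
      have h2 : swσ (DisSet σ κ σ' κ') u σ σ' u = σ' u := by simp [swσ, hcu]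
      rw [h1] at h2
      exact hTu (by rw [h2])
  · intro x; exact Finset.mem_univ _
  · rintro ⟨⟨σ, κ⟩, σ', κ'⟩
    by_cases hc : ConnectedIn (extGraph G) (DisSet σ κ σ' κ') (Sum.inl u) (Sum.inl v)
    · rw [swapP_pos hc, swapP_pos hc]
    · rw [swapP_neg hc]
      have hDy := DisSet_sw (DisSet σ κ σ' κ') u σ σ' κ κ'
      have hcy : ¬ ConnectedIn (extGraph G)
          (DisSet (swσ (DisSet σ κ σ' κ') u σ σ') (swκ (DisSet σ κ σ' κ') u κ κ')
            (swσ (DisSet σ κ σ' κ') u σ' σ) (swκ (DisSet σ κ σ' κ') u κ' κ))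
          (Sum.inl u) (Sum.inl v) := by rw [hDy]; exact hc
      rw [swapP_neg hcy, hDy, swσ_invol, swκ_invol, swσ_invol, swκ_invol]
end Aux6






/-- **Disagreement-percolation representation of truncated correlations**
(Proposition 3.1, item 1): for the RFIM on a finite graph `G`, at `β ∈ (0,∞)` and any
field realization `η`, and any vertices `u, v`,
`⟨σ_u; σ_v⟩ = 2 ⟨⟨ 1[u ↔_D v] ⟩⟩`, where the double brackets denote expectation with
respect to two independent identically distributed copies of the extended measure. -/
theorem truncated_correlation_eq_disagreement
    {V : Type} [Fintype V] [DecidableEq V] (G : SimpleGraph V) [DecidableRel G.Adj]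
    (J h ε β : ℝ) (hJ : 0 < J) (hε : 0 < ε) (hβ : 0 < β) (η : V → ℝ) (u v : V) :
    thermalG G J h ε β η ∅ (fun _ => pl) (fun σ => spinR (σ u) * spinR (σ v)) -
      thermalG G J h ε β η ∅ (fun _ => pl) (fun σ => spinR (σ u)) *
        thermalG G J h ε β η ∅ (fun _ => pl) (fun σ => spinR (σ v)) =
    2 * extExp2 G J h ε β η ∅ (fun _ => pl) (fun _ => pl)
      (fun σ κ σ' κ' =>
        if ConnectedIn (extGraph G) (DisSet σ κ σ' κ') (Sum.inl u) (Sum.inl v)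
        then 1 else 0) := by
  classical
  have hflip : ∀ φ : (V → Spin) → ℝ,
      (∑ σ₀ : V → Spin, φ (fun z => negS (σ₀ z))) = ∑ σ₀ : V → Spin, φ σ₀ := by
    intro φ
    apply Fintype.sum_bijective (fun (σ₀ : V → Spin) => fun z => negS (σ₀ z))
    · apply Function.Involutive.bijective
      intro σ₀; funext z; exact negS_negS _
    · intro σ₀; rfl
  set Gw : (V → Spin) → ℝ := fun σ₀ => ∑ κ₀ : G.edgeFinset → Mid, extWeight G J h ε β η σ₀ κ₀
    with hGwdef
  have hGw : ∀ σ₀ : V → Spin, Real.exp (-(β * hamG G J h ε η σ₀)) = Gw (fun z => negS (σ₀ z)) :=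
    fun σ₀ => (extWeight_sum_flip G hJ hβ h ε η σ₀).symm
  set Zb := ∑ σ₀ : V → Spin, Gw σ₀ with hZbdef
  set A := ∑ σ₀ : V → Spin, spinR (σ₀ u) * spinR (σ₀ v) * Gw σ₀ with hAdef
  set Bu := ∑ σ₀ : V → Spin, spinR (σ₀ u) * Gw σ₀ with hBudef
  set Bv := ∑ σ₀ : V → Spin, spinR (σ₀ v) * Gw σ₀ with hBvdef
  set N := ∑ σ₀ : V → Spin, ∑ κ₀ : G.edgeFinset → Mid, ∑ σ₀' : V → Spin,
      ∑ κ₀' : G.edgeFinset → Mid,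
      (if ConnectedIn (extGraph G) (DisSet σ₀ κ₀ σ₀' κ₀') (Sum.inl u) (Sum.inl v)
        then (1 : ℝ) else 0) * extWeight G J h ε β η σ₀ κ₀ * extWeight G J h ε β η σ₀' κ₀'
    with hNdef
  -- identification of the partition functions and numerators
  have hZs : (∑ σ₀ : V → Spin, Real.exp (-(β * hamG G J h ε η σ₀))) = Zb :=
    (Finset.sum_congr rfl fun σ₀ _ => hGw σ₀).trans (hflip Gw)
  have hZE : (∑ σ₀ : V → Spin, ∑ κ₀ : G.edgeFinset → Mid, extWeight G J h ε β η σ₀ κ₀) = Zb :=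
    rfl
  have hNum_uv : (∑ σ₀ : V → Spin,
      spinR (σ₀ u) * spinR (σ₀ v) * Real.exp (-(β * hamG G J h ε η σ₀))) = A := by
    refine Eq.trans (Finset.sum_congr rfl fun σ₀ _ => ?_)
      (hflip (fun σ₁ => spinR (σ₁ u) * spinR (σ₁ v) * Gw σ₁))
    show spinR (σ₀ u) * spinR (σ₀ v) * Real.exp (-(β * hamG G J h ε η σ₀))
      = spinR (negS (σ₀ u)) * spinR (negS (σ₀ v)) * Gw (fun z => negS (σ₀ z))
    rw [hGw σ₀, spinR_negS, spinR_negS]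
    ring
  have hNum_u : (∑ σ₀ : V → Spin,
      spinR (σ₀ u) * Real.exp (-(β * hamG G J h ε η σ₀))) = -Bu := by
    have step : (∑ σ₀ : V → Spin, spinR (σ₀ u) * Real.exp (-(β * hamG G J h ε η σ₀)))
        = ∑ σ₀ : V → Spin, -(spinR (negS (σ₀ u)) * Gw (fun z => negS (σ₀ z))) := by
      refine Finset.sum_congr rfl fun σ₀ _ => ?_
      rw [hGw σ₀, spinR_negS]
      ring
    rw [step, Finset.sum_neg_distrib]
    exact congrArg Neg.neg (hflip (fun σ₁ => spinR (σ₁ u) * Gw σ₁))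
  have hNum_v : (∑ σ₀ : V → Spin,
      spinR (σ₀ v) * Real.exp (-(β * hamG G J h ε η σ₀))) = -Bv := by
    have step : (∑ σ₀ : V → Spin, spinR (σ₀ v) * Real.exp (-(β * hamG G J h ε η σ₀)))
        = ∑ σ₀ : V → Spin, -(spinR (negS (σ₀ v)) * Gw (fun z => negS (σ₀ z))) := by
      refine Finset.sum_congr rfl fun σ₀ _ => ?_
      rw [hGw σ₀, spinR_negS]
      ring
    rw [step, Finset.sum_neg_distrib]
    exact congrArg Neg.neg (hflip (fun σ₁ => spinR (σ₁ v) * Gw σ₁))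
  have hZb_pos : 0 < Zb := by
    rw [← hZs]
    exact Finset.sum_pos (fun _ _ => Real.exp_pos _) ⟨fun _ => pl, Finset.mem_univ _⟩
  have hZb_ne : Zb ≠ 0 := ne_of_gt hZb_pos
  -- product structure of double sums
  have hprod : ∀ F K : (V → Spin) → (G.edgeFinset → Mid) → ℝ,
      (∑ x : ((V → Spin) × (G.edgeFinset → Mid)) × ((V → Spin) × (G.edgeFinset → Mid)),
        F x.1.1 x.1.2 * K x.2.1 x.2.2)
      = (∑ σ₀ : V → Spin, ∑ κ₀ : G.edgeFinset → Mid, F σ₀ κ₀)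
        * (∑ σ₀ : V → Spin, ∑ κ₀ : G.edgeFinset → Mid, K σ₀ κ₀) := by
    intro F K
    calc (∑ x : ((V → Spin) × (G.edgeFinset → Mid)) × ((V → Spin) × (G.edgeFinset → Mid)),
          F x.1.1 x.1.2 * K x.2.1 x.2.2)
        = ∑ p : (V → Spin) × (G.edgeFinset → Mid), ∑ q : (V → Spin) × (G.edgeFinset → Mid),
            F p.1 p.2 * K q.1 q.2 :=
          Fintype.sum_prod_type' (f := fun p q : (V → Spin) × (G.edgeFinset → Mid) =>
            F p.1 p.2 * K q.1 q.2)
      _ = (∑ p : (V → Spin) × (G.edgeFinset → Mid), F p.1 p.2)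
          * ∑ q : (V → Spin) × (G.edgeFinset → Mid), K q.1 q.2 := by
          rw [← Finset.sum_mul_sum]
      _ = (∑ σ₀ : V → Spin, ∑ κ₀ : G.edgeFinset → Mid, F σ₀ κ₀)
          * (∑ σ₀ : V → Spin, ∑ κ₀ : G.edgeFinset → Mid, K σ₀ κ₀) := by
          rw [Fintype.sum_prod_type' (f := fun σ₀ κ₀ => F σ₀ κ₀),
            Fintype.sum_prod_type' (f := fun σ₀ κ₀ => K σ₀ κ₀)]
  have hquad : ∀ F : (V → Spin) → (G.edgeFinset → Mid) → (V → Spin) →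
      (G.edgeFinset → Mid) → ℝ,
      (∑ x : ((V → Spin) × (G.edgeFinset → Mid)) × ((V → Spin) × (G.edgeFinset → Mid)),
        F x.1.1 x.1.2 x.2.1 x.2.2)
      = ∑ σ₀ : V → Spin, ∑ κ₀ : G.edgeFinset → Mid, ∑ σ₀' : V → Spin,
          ∑ κ₀' : G.edgeFinset → Mid, F σ₀ κ₀ σ₀' κ₀' := by
    intro F
    calc (∑ x : ((V → Spin) × (G.edgeFinset → Mid)) × ((V → Spin) × (G.edgeFinset → Mid)),
          F x.1.1 x.1.2 x.2.1 x.2.2)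
        = ∑ p : (V → Spin) × (G.edgeFinset → Mid), ∑ q : (V → Spin) × (G.edgeFinset → Mid),
            F p.1 p.2 q.1 q.2 :=
          Fintype.sum_prod_type' (f := fun p q : (V → Spin) × (G.edgeFinset → Mid) =>
            F p.1 p.2 q.1 q.2)
      _ = ∑ σ₀ : V → Spin, ∑ κ₀ : G.edgeFinset → Mid,
            ∑ q : (V → Spin) × (G.edgeFinset → Mid), F σ₀ κ₀ q.1 q.2 :=
          Fintype.sum_prod_type' (f := fun σ₀ κ₀ =>
            ∑ q : (V → Spin) × (G.edgeFinset → Mid), F σ₀ κ₀ q.1 q.2)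
      _ = ∑ σ₀ : V → Spin, ∑ κ₀ : G.edgeFinset → Mid, ∑ σ₀' : V → Spin,
            ∑ κ₀' : G.edgeFinset → Mid, F σ₀ κ₀ σ₀' κ₀' := by
          refine Finset.sum_congr rfl fun σ₀ _ => Finset.sum_congr rfl fun κ₀ _ => ?_
          exact Fintype.sum_prod_type' (f := fun σ₀' κ₀' => F σ₀ κ₀ σ₀' κ₀')
  -- the four Gaussian-type identifications
  have hAw : (∑ σ₀ : V → Spin, ∑ κ₀ : G.edgeFinset → Mid,
      spinR (σ₀ u) * spinR (σ₀ v) * extWeight G J h ε β η σ₀ κ₀) = A :=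
    Finset.sum_congr rfl fun σ₀ _ => (Finset.mul_sum _ _ _).symm
  have hBuw : (∑ σ₀ : V → Spin, ∑ κ₀ : G.edgeFinset → Mid,
      spinR (σ₀ u) * extWeight G J h ε β η σ₀ κ₀) = Bu :=
    Finset.sum_congr rfl fun σ₀ _ => (Finset.mul_sum _ _ _).symm
  have hBvw : (∑ σ₀ : V → Spin, ∑ κ₀ : G.edgeFinset → Mid,
      spinR (σ₀ v) * extWeight G J h ε β η σ₀ κ₀) = Bv :=
    Finset.sum_congr rfl fun σ₀ _ => (Finset.mul_sum _ _ _).symm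
  have e1 : (∑ x : ((V → Spin) × (G.edgeFinset → Mid)) × ((V → Spin) × (G.edgeFinset → Mid)),
      (spinR (x.1.1 u) * spinR (x.1.1 v) * extWeight G J h ε β η x.1.1 x.1.2)
        * extWeight G J h ε β η x.2.1 x.2.2) = A * Zb := by
    refine (hprod (fun σ₀ κ₀ => spinR (σ₀ u) * spinR (σ₀ v) * extWeight G J h ε β η σ₀ κ₀)
      (extWeight G J h ε β η)).trans ?_
    exact congrArg₂ (· * ·) hAw hZE
  have e2 : (∑ x : ((V → Spin) × (G.edgeFinset → Mid)) × ((V → Spin) × (G.edgeFinset → Mid)),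
      extWeight G J h ε β η x.1.1 x.1.2
        * (spinR (x.2.1 u) * spinR (x.2.1 v) * extWeight G J h ε β η x.2.1 x.2.2)) = Zb * A := by
    refine (hprod (extWeight G J h ε β η)
      (fun σ₀ κ₀ => spinR (σ₀ u) * spinR (σ₀ v) * extWeight G J h ε β η σ₀ κ₀)).trans ?_
    exact congrArg₂ (· * ·) hZE hAw
  have e3 : (∑ x : ((V → Spin) × (G.edgeFinset → Mid)) × ((V → Spin) × (G.edgeFinset → Mid)),
      (spinR (x.1.1 u) * extWeight G J h ε β η x.1.1 x.1.2)
        * (spinR (x.2.1 v) * extWeight G J h ε β η x.2.1 x.2.2)) = Bu * Bv := by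
    refine (hprod (fun σ₀ κ₀ => spinR (σ₀ u) * extWeight G J h ε β η σ₀ κ₀)
      (fun σ₀ κ₀ => spinR (σ₀ v) * extWeight G J h ε β η σ₀ κ₀)).trans ?_
    exact congrArg₂ (· * ·) hBuw hBvw
  have e4 : (∑ x : ((V → Spin) × (G.edgeFinset → Mid)) × ((V → Spin) × (G.edgeFinset → Mid)),
      (spinR (x.1.1 v) * extWeight G J h ε β η x.1.1 x.1.2)
        * (spinR (x.2.1 u) * extWeight G J h ε β η x.2.1 x.2.2)) = Bv * Bu := by
    refine (hprod (fun σ₀ κ₀ => spinR (σ₀ v) * extWeight G J h ε β η σ₀ κ₀)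
      (fun σ₀ κ₀ => spinR (σ₀ u) * extWeight G J h ε β η σ₀ κ₀)).trans ?_
    exact congrArg₂ (· * ·) hBvw hBuw
  have eN : (∑ x : ((V → Spin) × (G.edgeFinset → Mid)) × ((V → Spin) × (G.edgeFinset → Mid)),
      (if ConnectedIn (extGraph G) (DisSet x.1.1 x.1.2 x.2.1 x.2.2) (Sum.inl u) (Sum.inl v)
        then (4 : ℝ) else 0)
        * (extWeight G J h ε β η x.1.1 x.1.2 * extWeight G J h ε β η x.2.1 x.2.2)) = 4 * N := by
    have step : (∑ x : ((V → Spin) × (G.edgeFinset → Mid)) ×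
        ((V → Spin) × (G.edgeFinset → Mid)),
        (if ConnectedIn (extGraph G) (DisSet x.1.1 x.1.2 x.2.1 x.2.2) (Sum.inl u) (Sum.inl v)
          then (4 : ℝ) else 0)
          * (extWeight G J h ε β η x.1.1 x.1.2 * extWeight G J h ε β η x.2.1 x.2.2))
        = ∑ x : ((V → Spin) × (G.edgeFinset → Mid)) × ((V → Spin) × (G.edgeFinset → Mid)),
          4 * ((if ConnectedIn (extGraph G) (DisSet x.1.1 x.1.2 x.2.1 x.2.2)
              (Sum.inl u) (Sum.inl v) then (1 : ℝ) else 0)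
            * extWeight G J h ε β η x.1.1 x.1.2 * extWeight G J h ε β η x.2.1 x.2.2) := by
      refine Finset.sum_congr rfl fun x _ => ?_
      split_ifs <;> ring
    rw [step, ← Finset.mul_sum]
    rw [hquad (fun σ₀ κ₀ σ₀' κ₀' =>
      (if ConnectedIn (extGraph G) (DisSet σ₀ κ₀ σ₀' κ₀') (Sum.inl u) (Sum.inl v)
        then (1 : ℝ) else 0) * extWeight G J h ε β η σ₀ κ₀ * extWeight G J h ε β η σ₀' κ₀')]
  have hcan := cancel G J h ε β η u v
  have h0 : (∑ x : ((V → Spin) × (G.edgeFinset → Mid)) × ((V → Spin) × (G.edgeFinset → Mid)),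
      ((spinR (x.1.1 u) - spinR (x.2.1 u)) * (spinR (x.1.1 v) - spinR (x.2.1 v))
        * (extWeight G J h ε β η x.1.1 x.1.2 * extWeight G J h ε β η x.2.1 x.2.2)
      - ((if ConnectedIn (extGraph G) (DisSet x.1.1 x.1.2 x.2.1 x.2.2) (Sum.inl u) (Sum.inl v)
          then (4 : ℝ) else 0)
        * (extWeight G J h ε β η x.1.1 x.1.2 * extWeight G J h ε β η x.2.1 x.2.2)))) = 0 :=
    (Finset.sum_congr rfl fun x _ => (sub_mul _ _ _).symm).trans hcan
  rw [Finset.sum_sub_distrib] at h0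
  have hexp : (∑ x : ((V → Spin) × (G.edgeFinset → Mid)) × ((V → Spin) × (G.edgeFinset → Mid)),
      (spinR (x.1.1 u) - spinR (x.2.1 u)) * (spinR (x.1.1 v) - spinR (x.2.1 v))
        * (extWeight G J h ε β η x.1.1 x.1.2 * extWeight G J h ε β η x.2.1 x.2.2))
      = 2 * (A * Zb) - 2 * (Bu * Bv) := by
    have split : ∀ x : ((V → Spin) × (G.edgeFinset → Mid)) ×
        ((V → Spin) × (G.edgeFinset → Mid)),
        (spinR (x.1.1 u) - spinR (x.2.1 u)) * (spinR (x.1.1 v) - spinR (x.2.1 v))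
          * (extWeight G J h ε β η x.1.1 x.1.2 * extWeight G J h ε β η x.2.1 x.2.2)
        = ((spinR (x.1.1 u) * spinR (x.1.1 v) * extWeight G J h ε β η x.1.1 x.1.2)
              * extWeight G J h ε β η x.2.1 x.2.2
            + extWeight G J h ε β η x.1.1 x.1.2
              * (spinR (x.2.1 u) * spinR (x.2.1 v) * extWeight G J h ε β η x.2.1 x.2.2))
          - (spinR (x.1.1 u) * extWeight G J h ε β η x.1.1 x.1.2)
              * (spinR (x.2.1 v) * extWeight G J h ε β η x.2.1 x.2.2)
          - (spinR (x.1.1 v) * extWeight G J h ε β η x.1.1 x.1.2)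
              * (spinR (x.2.1 u) * extWeight G J h ε β η x.2.1 x.2.2) := fun x => by ring
    rw [Finset.sum_congr rfl fun x _ => split x, Finset.sum_sub_distrib,
      Finset.sum_sub_distrib, Finset.sum_add_distrib, e1, e2, e3, e4]
    ring
  rw [hexp, eN] at h0
  have hkey : A * Zb - Bu * Bv = 2 * N := by linarith
  -- final assembly
  simp only [thermalG, ZG, extExp2, extZ, Finset.notMem_empty, false_implies, implies_true,
    if_true, and_self, ite_true]
  rw [hNum_uv, hNum_u, hNum_v, hZs, ← hNdef, hZE]
  rw [div_mul_div_comm]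
  field_simp
  linear_combination hkey

end RFIM
end
end

section
/- Let G be a finite graph, β ∈ (0,∞), η a field realization, A, S ⊆ V(G), and τ, τ′ : A → {−1,+1}. Define the swap map R_S^A on pairs of extended configurations (σ̄, σ̄′) as follows: if the union C_S of connected components of the disagreement set D(σ̄,σ̄′) meeting S intersects A, R_S^A is the identity; otherwise R_S^A exchanges the values of σ̄ and σ̄′ at every site of C_S and leaves them unchanged elsewhere. Then the product measure P̄_Ḡ^{A,τ} ⊗ P̄_Ḡ^{A,τ′} is invariant under R_S^A. -/
open MeasureTheory ProbabilityTheory Real BigOperators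
open scoped Classical

noncomputable section
namespace RFIM

section SwapProof

variable {V : Type} [Fintype V] [DecidableEq V] (G : SimpleGraph V) [DecidableRel G.Adj]

lemma mem_dis_of_mem_compS {S : Finset V} {σ : V → Spin} {κ : G.edgeFinset → Mid}
    {σ' : V → Spin} {κ' : G.edgeFinset → Mid} {z : V ⊕ G.edgeFinset}
    (hz : z ∈ compS G S σ κ σ' κ') : z ∈ DisSet σ κ σ' κ' := by
  obtain ⟨s, hs, p, hp⟩ := hz
  exact hp z p.start_mem_support

lemma compS_of_adj {S : Finset V} {σ : V → Spin} {κ : G.edgeFinset → Mid}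
    {σ' : V → Spin} {κ' : G.edgeFinset → Mid} {z z' : V ⊕ G.edgeFinset}
    (hz : z ∈ compS G S σ κ σ' κ') (hadj : (extGraph G).Adj z' z)
    (hd : z' ∈ DisSet σ κ σ' κ') : z' ∈ compS G S σ κ σ' κ' := by
  obtain ⟨s, hs, p, hp⟩ := hz
  refine ⟨s, hs, SimpleGraph.Walk.cons hadj p, ?_⟩
  intro w hw
  rw [SimpleGraph.Walk.support_cons] at hw
  rcases List.mem_cons.mp hw with (rfl | hw)
  · exact hd
  · exact hp w hw

lemma extWeight_swap (J h ε β : ℝ) (η : V → ℝ) (S : Finset V)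
    (σ : V → Spin) (κ : G.edgeFinset → Mid) (σ' : V → Spin) (κ' : G.edgeFinset → Mid) :
    extWeight G J h ε β η
        (fun v => if Sum.inl v ∈ compS G S σ κ σ' κ' then σ' v else σ v)
        (fun e => if Sum.inr e ∈ compS G S σ κ σ' κ' then κ' e else κ e) *
      extWeight G J h ε β η
        (fun v => if Sum.inl v ∈ compS G S σ κ σ' κ' then σ v else σ' v)
        (fun e => if Sum.inr e ∈ compS G S σ κ σ' κ' then κ e else κ' e) =
    extWeight G J h ε β η σ κ * extWeight G J h ε β η σ' κ' := by
  set C := compS G S σ κ σ' κ' with hC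
  -- key per-site, per-edge factor identity
  have hkey : ∀ (u : V) (ee : G.edgeFinset), u ∈ (ee : Sym2 V) →
      Wgt J β ((if Sum.inl u ∈ C then σ' u else σ u : Spin) : ℤ)
          ((if Sum.inr ee ∈ C then κ' ee else κ ee : Mid) : ℤ) *
        Wgt J β ((if Sum.inl u ∈ C then σ u else σ' u : Spin) : ℤ)
          ((if Sum.inr ee ∈ C then κ ee else κ' ee : Mid) : ℤ) =
      Wgt J β ((σ u : ℤ)) ((κ ee : ℤ)) * Wgt J β ((σ' u : ℤ)) ((κ' ee : ℤ)) := by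
    intro u ee hue
    have hadj : (extGraph G).Adj (Sum.inl u) (Sum.inr ee) := hue
    by_cases hu : Sum.inl u ∈ C <;> by_cases hm : Sum.inr ee ∈ C
    · simp only [if_pos hu, if_pos hm]; ring
    · have heq : κ ee = κ' ee := by
        by_contra hne
        exact hm (compS_of_adj G hu hadj (fun hcontra =>
          hne (Subtype.ext hcontra)))
      simp only [if_pos hu, if_neg hm, heq]; ring
    · have heq : σ u = σ' u := by
        by_contra hne
        exact hu (compS_of_adj G hm ((extGraph G).adj_symm hadj) (fun hcontra =>
          hne (Subtype.ext hcontra)))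
      simp only [if_neg hu, if_pos hm, heq]; ring
    · simp only [if_neg hu, if_neg hm]
  -- per-edge identity
  have hedge : ∀ ee : G.edgeFinset,
      edgeW J β (fun v => if Sum.inl v ∈ C then σ' v else σ v)
          ((if Sum.inr ee ∈ C then κ' ee else κ ee : Mid) : ℤ) (ee : Sym2 V) *
        edgeW J β (fun v => if Sum.inl v ∈ C then σ v else σ' v)
          ((if Sum.inr ee ∈ C then κ ee else κ' ee : Mid) : ℤ) (ee : Sym2 V) =
      edgeW J β σ ((κ ee : ℤ)) (ee : Sym2 V) * edgeW J β σ' ((κ' ee : ℤ)) (ee : Sym2 V) := by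
    rintro ⟨e, he⟩
    induction e using Sym2.ind with
    | _ u v =>
      have hu : u ∈ ((⟨s(u, v), he⟩ : G.edgeFinset) : Sym2 V) := Sym2.mem_mk_left u v
      have hv : v ∈ ((⟨s(u, v), he⟩ : G.edgeFinset) : Sym2 V) := Sym2.mem_mk_right u v
      have h1 := hkey u ⟨s(u, v), he⟩ hu
      have h2 := hkey v ⟨s(u, v), he⟩ hv
      simp only [edgeW, Sym2.lift_mk]
      calc Wgt J β ((if Sum.inl u ∈ C then σ' u else σ u : Spin) : ℤ)
              ((if Sum.inr (⟨s(u, v), he⟩ : G.edgeFinset) ∈ C then κ' ⟨s(u, v), he⟩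
                  else κ ⟨s(u, v), he⟩ : Mid) : ℤ) *
            Wgt J β ((if Sum.inl v ∈ C then σ' v else σ v : Spin) : ℤ)
              ((if Sum.inr (⟨s(u, v), he⟩ : G.edgeFinset) ∈ C then κ' ⟨s(u, v), he⟩
                  else κ ⟨s(u, v), he⟩ : Mid) : ℤ) *
            (Wgt J β ((if Sum.inl u ∈ C then σ u else σ' u : Spin) : ℤ)
              ((if Sum.inr (⟨s(u, v), he⟩ : G.edgeFinset) ∈ C then κ ⟨s(u, v), he⟩
                  else κ' ⟨s(u, v), he⟩ : Mid) : ℤ) *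
            Wgt J β ((if Sum.inl v ∈ C then σ v else σ' v : Spin) : ℤ)
              ((if Sum.inr (⟨s(u, v), he⟩ : G.edgeFinset) ∈ C then κ ⟨s(u, v), he⟩
                  else κ' ⟨s(u, v), he⟩ : Mid) : ℤ))
          = (Wgt J β ((if Sum.inl u ∈ C then σ' u else σ u : Spin) : ℤ)
              ((if Sum.inr (⟨s(u, v), he⟩ : G.edgeFinset) ∈ C then κ' ⟨s(u, v), he⟩
                  else κ ⟨s(u, v), he⟩ : Mid) : ℤ) *
            Wgt J β ((if Sum.inl u ∈ C then σ u else σ' u : Spin) : ℤ)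
              ((if Sum.inr (⟨s(u, v), he⟩ : G.edgeFinset) ∈ C then κ ⟨s(u, v), he⟩
                  else κ' ⟨s(u, v), he⟩ : Mid) : ℤ)) *
            (Wgt J β ((if Sum.inl v ∈ C then σ' v else σ v : Spin) : ℤ)
              ((if Sum.inr (⟨s(u, v), he⟩ : G.edgeFinset) ∈ C then κ' ⟨s(u, v), he⟩
                  else κ ⟨s(u, v), he⟩ : Mid) : ℤ) *
            Wgt J β ((if Sum.inl v ∈ C then σ v else σ' v : Spin) : ℤ)
              ((if Sum.inr (⟨s(u, v), he⟩ : G.edgeFinset) ∈ C then κ ⟨s(u, v), he⟩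
                  else κ' ⟨s(u, v), he⟩ : Mid) : ℤ)) := by ring
        _ = Wgt J β ((σ u : ℤ)) ((κ ⟨s(u, v), he⟩ : ℤ)) *
              Wgt J β ((σ' u : ℤ)) ((κ' ⟨s(u, v), he⟩ : ℤ)) *
            (Wgt J β ((σ v : ℤ)) ((κ ⟨s(u, v), he⟩ : ℤ)) *
              Wgt J β ((σ' v : ℤ)) ((κ' ⟨s(u, v), he⟩ : ℤ))) := by rw [h1, h2]
        _ = _ := by ring
  -- field-term identity
  have hfield : (∑ w, (h + ε * η w) *
        spinR (if Sum.inl w ∈ C then σ' w else σ w)) +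
      (∑ w, (h + ε * η w) * spinR (if Sum.inl w ∈ C then σ w else σ' w)) =
      (∑ w, (h + ε * η w) * spinR (σ w)) + (∑ w, (h + ε * η w) * spinR (σ' w)) := by
    rw [← Finset.sum_add_distrib, ← Finset.sum_add_distrib]
    refine Finset.sum_congr rfl fun w _ => ?_
    by_cases hw : Sum.inl w ∈ C
    · simp only [if_pos hw]; ring
    · simp only [if_neg hw]
  unfold extWeight
  rw [mul_mul_mul_comm, mul_mul_mul_comm
    (∏ e : G.edgeFinset, edgeW J β σ ((κ e : ℤ)) (e : Sym2 V))]
  congr 1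
  · rw [← Finset.prod_mul_distrib, ← Finset.prod_mul_distrib]
    exact Finset.prod_congr rfl fun ee _ => hedge ee
  · rw [← Real.exp_add, ← Real.exp_add]
    congr 1
    linear_combination (-β) * hfield

end SwapProof

/-- **Invariance under the cluster swap** (Proposition 3.2): for any `A, S ⊆ V(G)` and
boundary values `τ, τ'` on `A`, the product measure `P̄^{A,τ} ⊗ P̄^{A,τ'}` is invariant
under the swap map `R_S^A` (which exchanges the two configurations on the union `𝒞_S` of
the disagreement components meeting `S`, unless `𝒞_S` meets `A`). -/
theorem swap_invariance
    {V : Type} [Fintype V] [DecidableEq V] (G : SimpleGraph V) [DecidableRel G.Adj]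
    (J h ε β : ℝ) (hJ : 0 < J) (hε : 0 < ε) (hβ : 0 < β) (η : V → ℝ)
    (A S : Finset V) (τ τ' : V → Spin) :
    ∀ (σ : V → Spin) (κ : G.edgeFinset → Mid) (σ' : V → Spin) (κ' : G.edgeFinset → Mid),
      extProb G J h ε β η A τ (Rswap G A S σ κ σ' κ').1.1 (Rswap G A S σ κ σ' κ').1.2 *
        extProb G J h ε β η A τ' (Rswap G A S σ κ σ' κ').2.1 (Rswap G A S σ κ σ' κ').2.2 =
      extProb G J h ε β η A τ σ κ * extProb G J h ε β η A τ' σ' κ' := by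
  intro σ κ σ' κ'
  by_cases hA : ∃ a ∈ A, Sum.inl a ∈ compS G S σ κ σ' κ'
  · rw [Rswap, if_pos hA]
  · rw [Rswap, if_neg hA]
    set C := compS G S σ κ σ' κ' with hC
    have hAC : ∀ v ∈ A, Sum.inl v ∉ C := fun v hv hvc => hA ⟨v, hv, hvc⟩
    have hc1 : (∀ v ∈ A, (if Sum.inl v ∈ C then σ' v else σ v) = τ v) ↔
        (∀ v ∈ A, σ v = τ v) := by
      constructor <;> intro hh v hv <;> have := hh v hv <;>
        simpa [if_neg (hAC v hv)] using this
    have hc2 : (∀ v ∈ A, (if Sum.inl v ∈ C then σ v else σ' v) = τ' v) ↔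
        (∀ v ∈ A, σ' v = τ' v) := by
      constructor <;> intro hh v hv <;> have := hh v hv <;>
        simpa [if_neg (hAC v hv)] using this
    have hW := extWeight_swap G J h ε β η S σ κ σ' κ'
    unfold extProb
    rw [div_mul_div_comm, div_mul_div_comm]
    congr 1
    by_cases h1 : ∀ v ∈ A, σ v = τ v
    · by_cases h2 : ∀ v ∈ A, σ' v = τ' v
      · rw [if_pos h1, if_pos h2, if_pos (hc1.mpr h1), if_pos (hc2.mpr h2)]
        exact hW
      · rw [if_neg h2, if_neg (fun hh => h2 (hc2.mp hh)), mul_zero, mul_zero]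
    · rw [if_neg h1, if_neg (fun hh => h1 (hc1.mp hh)), zero_mul, zero_mul]
end RFIM
end
end
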